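/- arXiv:2001.08659 — 4 statements merged into one kernel-verified Lean document; each statement's English description precedes it below -/
import Mathlib

section
/- The formal power series T(z) = Σ_{n≥1} n^{n-1} zⁿ/n! satisfies the functional equation T(z) = z · exp(T(z)). -/
section AbelArithmetic

open Finset Polynomial





/-- n-th finite difference of x^m vanishes for m < n. -/
lemma altsum (n : ℕ) : ∀ m : ℕ, m < n →
    ∑ k ∈ range (n + 1), (-1 : ℚ) ^ k * (n.choose k) * (k : ℚ) ^ m = 0 := by
  induction n with
  | zero => intro m hm; omega
  | succ n ih =>
    intro m hm
    match m with
    | 0 =>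
      simp only [pow_zero, mul_one]
      have h := Int.alternating_sum_range_choose (n := n + 1)
      rw [if_neg (Nat.succ_ne_zero n)] at h
      have h2 : ((∑ i ∈ range (n + 2), (-1 : ℤ) ^ i * ((n+1).choose i) : ℤ) : ℚ) = 0 := by
        rw [h]; norm_num
      push_cast at h2
      convert h2 using 2
    | m + 1 =>
      rw [Finset.sum_range_succ']
      have h0 : (-1:ℚ)^0 * ((n+1).choose 0) * ((0:ℕ):ℚ)^(m+1) = 0 := by simp
      rw [h0, add_zero]
      have key : ∀ j : ℕ, (-1:ℚ)^(j+1) * ((n+1).choose (j+1)) * ((j+1:ℕ):ℚ)^(m+1)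
          = -((n:ℚ)+1) * ((-1:ℚ)^j * (n.choose j) * ((j:ℚ)+1)^m) := by
        intro j
        have h : ((n+1) * n.choose j : ℕ) = ((n+1).choose (j+1) * (j+1) : ℕ) :=
          Nat.add_one_mul_choose_eq n j
        have h' : ((n:ℚ)+1) * (n.choose j) = ((n+1).choose (j+1)) * ((j:ℚ)+1) := by
          exact_mod_cast congrArg (Nat.cast : ℕ → ℚ) h
        have e : ((j:ℚ)+1)^(m+1) = ((j:ℚ)+1)^m * ((j:ℚ)+1) := by ring
        push_cast
        rw [e]
        calc (-1:ℚ)^(j+1) * ((n+1).choose (j+1)) * (((j:ℚ)+1)^m * ((j:ℚ)+1))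
            = (-1:ℚ)^(j+1) * (((n+1).choose (j+1)) * ((j:ℚ)+1)) * ((j:ℚ)+1)^m := by ring
          _ = (-1:ℚ)^(j+1) * (((n:ℚ)+1) * (n.choose j)) * ((j:ℚ)+1)^m := by rw [← h']
          _ = -((n:ℚ)+1) * ((-1:ℚ)^j * (n.choose j) * ((j:ℚ)+1)^m) := by ring
      rw [Finset.sum_congr rfl (fun j _ => key j), ← Finset.mul_sum]
      have expand : ∀ j : ℕ, ((j:ℚ)+1)^m = ∑ i ∈ range (m+1), (m.choose i) * (j:ℚ)^i := by
        intro j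
        rw [add_pow]
        apply Finset.sum_congr rfl
        intro i hi; ring
      have hz : (∑ j ∈ range (n+1), (-1:ℚ)^j * (n.choose j) * ((j:ℚ)+1)^m) = 0 := by
        calc (∑ j ∈ range (n+1), (-1:ℚ)^j * (n.choose j) * ((j:ℚ)+1)^m)
            = ∑ j ∈ range (n+1), ∑ i ∈ range (m+1),
                (m.choose i) * ((-1:ℚ)^j * (n.choose j) * (j:ℚ)^i) := by
              apply Finset.sum_congr rfl; intro j _
              rw [expand j, Finset.mul_sum]
              apply Finset.sum_congr rfl; intro i _; ring
          _ = ∑ i ∈ range (m+1), (m.choose i) *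
                ∑ j ∈ range (n+1), (-1:ℚ)^j * (n.choose j) * (j:ℚ)^i := by
              rw [Finset.sum_comm]
              apply Finset.sum_congr rfl; intro i _
              rw [Finset.mul_sum]
          _ = 0 := by
              apply Finset.sum_eq_zero; intro i hi
              rw [ih i (by simp at hi; omega), mul_zero]
      rw [hz]; ring

noncomputable def Lp (n : ℕ) : Polynomial ℚ :=
  ∑ j ∈ range n, C ((n.choose (j+1) * (j+1)^j : ℕ) : ℚ) *
    (X + C ((n - (j+1) : ℕ) : ℚ)) ^ (n - (j+1))

lemma deriv_term (a b : ℚ) (e : ℕ) :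
    derivative (C a * (X + C b) ^ e) = C a * (C (e:ℚ) * (X + C b) ^ (e-1)) := by
  rw [derivative_C_mul, derivative_pow, derivative_add, derivative_X, derivative_C]
  ring

lemma coeff_id (n j : ℕ) (hj : j < n) :
    ((n - j) * ((n+1).choose (j+1)) : ℕ) = ((n+1) * (n.choose (j+1)) : ℕ) := by
  have h1 := Nat.choose_succ_right_eq (n+1) (j+1)
  have h2 := Nat.add_one_mul_choose_eq n (j+1)
  have h3 : n + 1 - (j + 1) = n - j := by omega
  rw [h3] at h1
  rw [h2, h1, Nat.mul_comm]

lemma abelPoly : ∀ n : ℕ, 1 ≤ n → Lp n = C (n:ℚ) * (X + C (n:ℚ)) ^ (n-1) := by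
  intro n hn
  induction n, hn using Nat.le_induction with
  | base =>
    simp [Lp]
  | succ n hn ih =>
    set q : Polynomial ℚ := C ((n:ℚ)+1) * (X + C ((n:ℚ)+1)) ^ n with hq
    have hderiv : derivative (Lp (n+1)) = derivative q := by
      -- derivative of q
      have dq : derivative q = C ((n:ℚ)+1) * (C (n:ℚ) * (X + C ((n:ℚ)+1)) ^ (n-1)) := by
        rw [hq, deriv_term]
      -- derivative of Lp (n+1)
      have dL : derivative (Lp (n+1)) =
          ∑ j ∈ range (n+1), C (((n+1).choose (j+1) * (j+1)^j : ℕ) : ℚ) *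
            (C (((n - j : ℕ)) : ℚ) * (X + C ((n - j : ℕ) : ℚ)) ^ (n - j - 1)) := by
        rw [Lp, derivative_sum]
        apply Finset.sum_congr rfl
        intro j hj
        have h3 : n + 1 - (j + 1) = n - j := by omega
        rw [h3, deriv_term]
      rw [dL, dq]
      -- peel off the j = n term (zero)
      rw [Finset.sum_range_succ]
      have hlast : C (((n+1).choose (n+1) * (n+1)^n : ℕ) : ℚ) *
          (C (((n - n : ℕ)) : ℚ) * (X + C ((n - n : ℕ) : ℚ)) ^ (n - n - 1)) = 0 := by
        simp
      rw [hlast, add_zero]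
      -- rewrite coefficients using coeff_id and compare with shifted IH
      have step : ∀ j ∈ range n,
          C (((n+1).choose (j+1) * (j+1)^j : ℕ) : ℚ) *
            (C (((n - j : ℕ)) : ℚ) * (X + C ((n - j : ℕ) : ℚ)) ^ (n - j - 1))
          = C ((n:ℚ)+1) * (C ((n.choose (j+1) * (j+1)^j : ℕ) : ℚ) *
              (X + C (((n - (j+1) : ℕ) : ℚ) + 1)) ^ (n - (j+1))) := by
        intro j hj
        simp only [mem_range] at hj
        have hc : ((n - j : ℕ) : ℚ) * (((n+1).choose (j+1) : ℕ) : ℚ)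
            = ((n:ℚ)+1) * ((n.choose (j+1) : ℕ) : ℚ) := by
          have := coeff_id n j hj
          exact_mod_cast congrArg (Nat.cast : ℕ → ℚ) this
        have hcast : ((n - (j+1) : ℕ) : ℚ) + 1 = ((n - j : ℕ) : ℚ) := by
          have : (n - (j+1)) + 1 = n - j := by omega
          exact_mod_cast congrArg (Nat.cast : ℕ → ℚ) this
        have hexp : n - j - 1 = n - (j+1) := by omega
        rw [hcast, hexp]
        rw [← mul_assoc, ← C_mul, ← mul_assoc, ← C_mul]
        congr 1
        rw [Polynomial.C_inj]
        push_cast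
        linear_combination (((j:ℚ)+1)^j) * hc
      rw [Finset.sum_congr rfl step, ← Finset.mul_sum]
      -- now identify the sum with aeval (X + C 1) (Lp n)
      have shift : (∑ j ∈ range n, C ((n.choose (j+1) * (j+1)^j : ℕ) : ℚ) *
              (X + C (((n - (j+1) : ℕ) : ℚ) + 1)) ^ (n - (j+1)))
          = aeval (X + C (1:ℚ)) (Lp n) := by
        rw [Lp, map_sum]
        apply Finset.sum_congr rfl
        intro j hj
        simp only [map_mul, map_pow, map_add, aeval_X, aeval_C, Polynomial.C_add,
          Polynomial.C_1, Polynomial.algebraMap_eq]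
        ring
      rw [shift, ih]
      simp only [map_mul, map_pow, map_add, aeval_X, aeval_C, Polynomial.C_add,
        Polynomial.C_1, Polynomial.algebraMap_eq]
      ring
    -- equal derivatives ⇒ differ by a constant; evaluate at -(n+1)
    have hdz : derivative (Lp (n+1) - q) = 0 := by
      rw [derivative_sub, hderiv, sub_self]
    obtain ⟨c, hc⟩ : ∃ c, Lp (n+1) - q = C c :=
      ⟨_, Polynomial.eq_C_of_derivative_eq_zero hdz⟩
    have heval : (Lp (n+1) - q).eval (-(((n:ℚ))+1)) = 0 := by
      rw [eval_sub]
      have hq0 : q.eval (-((n:ℚ)+1)) = 0 := by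
        rw [hq]
        simp only [eval_mul, eval_pow, eval_add, eval_X, eval_C]
        have : (-((n:ℚ)+1) + ((n:ℚ)+1)) = 0 := by ring
        rw [this, zero_pow (by omega : n ≠ 0), mul_zero]
      rw [hq0, sub_zero]
      rw [Lp, eval_finset_sum]
      have term_eq : ∀ j ∈ range (n+1),
          (C (((n+1).choose (j+1) * (j+1)^j : ℕ) : ℚ) *
            (X + C ((n + 1 - (j+1) : ℕ) : ℚ)) ^ (n + 1 - (j+1))).eval (-((n:ℚ)+1))
          = (-1:ℚ)^(n-j) * (((n+1).choose (j+1)) : ℚ) * (((j:ℚ)+1)) ^ n := by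
        intro j hj
        simp only [mem_range] at hj
        rw [eval_mul, eval_pow, eval_add, eval_X, eval_C, eval_C]
        have h3 : n + 1 - (j + 1) = n - j := by omega
        have hcast : ((n - j : ℕ) : ℚ) = (n:ℚ) - j := by
          exact Nat.cast_sub (by omega : j ≤ n)
        rw [h3, hcast]
        have : (-((n:ℚ)+1) + ((n:ℚ) - j)) = -(((j:ℚ)+1)) := by ring
        rw [this, neg_pow]
        have hsplit : ((j:ℚ)+1)^j * ((j:ℚ)+1)^(n-j) = ((j:ℚ)+1)^n := by
          rw [← pow_add]
          congr 1
          omega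
        push_cast
        rw [← hsplit]
        ring
      rw [Finset.sum_congr rfl term_eq]
      -- this is (up to sign and reindex) the alternating sum, = 0
      have h := altsum (n+1) n (by omega)
      rw [Finset.sum_range_succ'] at h
      have h0 : (-1:ℚ)^0 * (((n+1).choose 0 : ℕ) : ℚ) * ((0:ℕ):ℚ)^n = 0 := by
        simp [zero_pow (by omega : n ≠ 0)]
      rw [h0, add_zero] at h
      calc ∑ j ∈ range (n+1), (-1:ℚ)^(n-j) * (((n+1).choose (j+1)):ℚ) * ((j:ℚ)+1)^n
          = ∑ j ∈ range (n+1), (-1:ℚ)^(n+1) *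
              ((-1:ℚ)^(j+1) * (((n+1).choose (j+1)):ℚ) * ((j+1:ℕ):ℚ)^n) := by
            apply Finset.sum_congr rfl
            intro j hj
            simp only [mem_range] at hj
            have hsgn : (-1:ℚ)^(n-j) = (-1:ℚ)^(n+1) * (-1:ℚ)^(j+1) := by
              rw [← pow_add]
              have e : (n+1)+(j+1) = (n-j) + 2*(j+1) := by omega
              rw [e, pow_add, pow_mul]
              norm_num
            rw [hsgn]
            push_cast
            ring
        _ = (-1:ℚ)^(n+1) * ∑ j ∈ range (n+1),
              (-1:ℚ)^(j+1) * (((n+1).choose (j+1)):ℚ) * ((j+1:ℕ):ℚ)^n := by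
            rw [Finset.mul_sum]
        _ = 0 := by rw [h, mul_zero]
    rw [hc] at heval
    simp only [eval_C] at heval
    have : Lp (n+1) = q := by
      have := hc
      rw [heval] at this
      simpa [sub_eq_zero] using this
    rw [this, hq]
    have h1 : ((n+1:ℕ):ℚ) = (n:ℚ)+1 := by push_cast; ring
    have h2 : n + 1 - 1 = n := by omega
    rw [h1, h2]

lemma abelEval (n : ℕ) (hn : 1 ≤ n) :
    ∑ j ∈ range n, ((n.choose (j+1) * (j+1)^j : ℕ) : ℚ) *
      (1 + ((n - (j+1) : ℕ) : ℚ)) ^ (n - (j+1)) = (n : ℚ) * (1 + (n:ℚ)) ^ (n-1) := by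
  have h := congrArg (Polynomial.eval (1:ℚ)) (abelPoly n hn)
  rw [Lp] at h
  rw [Polynomial.eval_finset_sum] at h
  simp only [Polynomial.eval_mul, Polynomial.eval_pow, Polynomial.eval_add,
    Polynomial.eval_X, Polynomial.eval_C] at h
  exact h

lemma keyId (n : ℕ) :
    ∑ j ∈ range (n+1), ((j:ℚ)+1)^j / (j.factorial : ℚ) *
        (((n+1-j:ℕ):ℚ)^(n-j) / (((n+1-j).factorial : ℕ) : ℚ))
      = ((n:ℚ)+1) * ((n:ℚ)+2)^n / (((n+1).factorial : ℕ) : ℚ) := by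
  have habel := abelEval (n+1) (by omega)
  -- massage habel
  have habel' : ∑ j ∈ range (n+1), (((n+1).choose (j+1) : ℕ) : ℚ) *
      (((j:ℚ)+1)^j * (((n+1-j:ℕ):ℚ))^(n-j)) = ((n:ℚ)+1) * ((n:ℚ)+2)^n := by
    have e1 : ∀ j ∈ range (n+1),
        (((n+1).choose (j+1) * (j+1)^j : ℕ) : ℚ) *
          (1 + ((n + 1 - (j+1) : ℕ) : ℚ)) ^ (n + 1 - (j+1))
        = (((n+1).choose (j+1) : ℕ) : ℚ) * (((j:ℚ)+1)^j * (((n+1-j:ℕ):ℚ))^(n-j)) := by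
      intro j hj
      simp only [mem_range] at hj
      have h2 : n + 1 - (j+1) = n - j := by omega
      have h3 : (1 : ℚ) + ((n - j : ℕ) : ℚ) = ((n + 1 - j : ℕ) : ℚ) := by
        have h3' : (n - j) + 1 = n + 1 - j := by omega
        calc (1 : ℚ) + ((n - j : ℕ) : ℚ) = (((n - j) + 1 : ℕ) : ℚ) := by push_cast; ring
          _ = _ := by rw [h3']
      rw [h2, h3]
      push_cast
      ring
    rw [Finset.sum_congr rfl e1] at habel
    rw [habel]
    have : ((n+1:ℕ):ℚ) = (n:ℚ)+1 := by push_cast; ring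
    rw [this]
    have h4 : n + 1 - 1 = n := by omega
    rw [h4]
    ring
  -- reflect the sum
  have hrefl : ∑ j ∈ range (n+1), (((n+1).choose j : ℕ) : ℚ) *
      (((j:ℚ)+1)^j * (((n+1-j:ℕ):ℚ))^(n-j)) = ((n:ℚ)+1) * ((n:ℚ)+2)^n := by
    rw [← habel']
    rw [← Finset.sum_range_reflect]
    apply Finset.sum_congr rfl
    intro j hj
    simp only [mem_range] at hj
    have e0 : n + 1 - 1 - j = n - j := by omega
    rw [e0]
    have e1 : (n+1).choose (n-j) = (n+1).choose (j+1) := by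
      rw [← Nat.choose_symm (by omega : n - j ≤ n + 1)]
      congr 1
      omega
    have e2 : n + 1 - (n - j) = j + 1 := by omega
    have e3 : n - (n - j) = j := by omega
    rw [e1, e2, e3]
    have e4 : ((n - j : ℕ) : ℚ) + 1 = ((n + 1 - j : ℕ) : ℚ) := by
      have : (n - j) + 1 = n + 1 - j := by omega
      exact_mod_cast congrArg (Nat.cast : ℕ → ℚ) this
    rw [e4]
    push_cast
    ring
  -- divide by (n+1)!
  have e5 : ∀ j ∈ range (n+1),
      ((j:ℚ)+1)^j / (j.factorial : ℚ) * (((n+1-j:ℕ):ℚ)^(n-j) / (((n+1-j).factorial : ℕ) : ℚ))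
      = (((n+1).choose j : ℕ) : ℚ) * (((j:ℚ)+1)^j * (((n+1-j:ℕ):ℚ))^(n-j))
          / (((n+1).factorial : ℕ) : ℚ) := by
    intro j hj
    simp only [mem_range] at hj
    rw [Nat.cast_choose ℚ (by omega : j ≤ n + 1)]
    have hj1 : ((j.factorial : ℕ) : ℚ) ≠ 0 := by exact_mod_cast j.factorial_ne_zero
    have hj2 : (((n+1-j).factorial : ℕ) : ℚ) ≠ 0 := by exact_mod_cast (n+1-j).factorial_ne_zero
    have hj3 : (((n+1).factorial : ℕ) : ℚ) ≠ 0 := by exact_mod_cast (n+1).factorial_ne_zero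
    field_simp
  rw [Finset.sum_congr rfl e5, ← Finset.sum_div, hrefl]


end AbelArithmetic

open PowerSeries

/-- Composition `F ∘ S` of formal power series, valid when `S` has zero constant
term: the `n`-th coefficient only depends on the first `n+1` terms of the sum
`Σ_k (coeff k F) S^k`. -/
noncomputable def psComp {A : Type*} [CommRing A] (F S : PowerSeries A) : PowerSeries A :=
  PowerSeries.mk fun n =>
    coeff (R := A) n (∑ k ∈ Finset.range (n + 1), PowerSeries.C (R := A) (coeff (R := A) k F) * S ^ k)

/-- The EGF of rooted labeled trees, `T(z) = Σ_{n≥1} n^{n-1} zⁿ/n!`. -/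
noncomputable def treeT : PowerSeries ℚ :=
  PowerSeries.mk fun n => if n = 0 then 0 else (n : ℚ) ^ (n - 1) / (n.factorial : ℚ)

lemma coeff_treeT (n : ℕ) :
    coeff n treeT = if n = 0 then 0 else (n : ℚ) ^ (n - 1) / (n.factorial : ℚ) :=
  coeff_mk n _

lemma constT : constantCoeff treeT = 0 := by
  rw [← coeff_zero_eq_constantCoeff_apply, coeff_treeT]
  simp

lemma coeff_treeT_pow_eq_zero {k n : ℕ} (h : n < k) : coeff n (treeT ^ k) = 0 := by
  have hd : (X : ℚ⟦X⟧) ^ k ∣ treeT ^ k :=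
    pow_dvd_pow_of_dvd (X_dvd_iff.mpr constT) k
  exact (X_pow_dvd_iff.mp hd) n h

noncomputable def SS (N : ℕ) : ℚ⟦X⟧ :=
  ∑ k ∈ Finset.range (N+1), PowerSeries.C ((1:ℚ)/(k.factorial : ℚ)) * treeT ^ k

lemma coeff_comp (n N : ℕ) (h : n ≤ N) :
    coeff n (psComp (exp ℚ) treeT) = coeff n (SS N) := by
  rw [psComp, coeff_mk, SS]
  rw [map_sum, map_sum]
  rw [Finset.sum_subset (Finset.range_subset_range.mpr (by omega : n + 1 ≤ N + 1))]
  · apply Finset.sum_congr rfl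
    intro k _
    rw [PowerSeries.coeff_C_mul, PowerSeries.coeff_C_mul, coeff_exp]
    norm_num
  · intro k hk hk'
    simp only [Finset.mem_range] at hk hk'
    rw [PowerSeries.coeff_C_mul, coeff_treeT_pow_eq_zero (by omega), mul_zero]

lemma deriv_SS (N : ℕ) : d⁄dX ℚ (SS (N+1)) = (d⁄dX ℚ treeT) * SS N := by
  rw [SS, map_sum, Finset.sum_range_succ']
  have h0 : d⁄dX ℚ (PowerSeries.C ((1:ℚ)/((0:ℕ).factorial : ℚ)) * treeT ^ 0) = 0 := by
    simp
  rw [h0, add_zero]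
  rw [SS, Finset.mul_sum]
  apply Finset.sum_congr rfl
  intro k _
  rw [Derivation.leibniz, Derivation.leibniz_pow, PowerSeries.derivative_C]
  simp only [smul_zero, mul_zero, add_zero, smul_smul, smul_eq_mul, Nat.add_sub_cancel]
  have hfac : ((1:ℚ)/(((k+1).factorial : ℕ) : ℚ)) * ((k+1 : ℕ) : ℚ)
      = (1:ℚ)/((k.factorial : ℕ) : ℚ) := by
    rw [Nat.factorial_succ]
    have h1 : ((k.factorial : ℕ) : ℚ) ≠ 0 := by exact_mod_cast k.factorial_ne_zero
    push_cast
    field_simp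
  calc (PowerSeries.C ((1:ℚ)/(((k+1).factorial : ℕ) : ℚ))) *
        ((k + 1) • (treeT ^ k * d⁄dX ℚ treeT))
      = PowerSeries.C ((1:ℚ)/(((k+1).factorial : ℕ) : ℚ)) *
          (PowerSeries.C ((k+1:ℕ) : ℚ) * (treeT ^ k * d⁄dX ℚ treeT)) := by
        rw [nsmul_eq_mul]
        have : ((k+1 : ℕ) : ℚ⟦X⟧) = PowerSeries.C ((k+1:ℕ) : ℚ) := by
          rw [← map_natCast (PowerSeries.C (R := ℚ)) (k+1)]
        rw [this]
    _ = PowerSeries.C (((1:ℚ)/(((k+1).factorial : ℕ) : ℚ)) * ((k+1:ℕ) : ℚ)) *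
          (treeT ^ k * d⁄dX ℚ treeT) := by
        rw [map_mul]; ring
    _ = d⁄dX ℚ treeT * (PowerSeries.C ((1:ℚ)/((k.factorial : ℕ) : ℚ)) * treeT ^ k) := by
        rw [hfac]; ring

lemma coeff_psComp_exp : ∀ n : ℕ, coeff n (psComp (exp ℚ) treeT)
    = ((n:ℚ)+1)^n / (((n+1).factorial : ℕ) : ℚ) := by
  intro n
  induction n using Nat.strong_induction_on with
  | _ n ih =>
    match n with
    | 0 =>
      rw [coeff_comp 0 0 le_rfl, SS]
      simp
    | n + 1 =>
      have hfne : (((n+2).factorial : ℕ) : ℚ) ≠ 0 := by exact_mod_cast (n+2).factorial_ne_zero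
      have hstep : coeff (n+1) (SS (n+1)) * (((n:ℕ):ℚ)+1)
          = ∑ j ∈ Finset.range (n+1), coeff j (d⁄dX ℚ treeT) * coeff (n-j) (SS n) := by
        have := PowerSeries.coeff_derivative (SS (n+1)) n
        push_cast at this
        rw [← this, deriv_SS, PowerSeries.coeff_mul,
          Finset.Nat.sum_antidiagonal_eq_sum_range_succ_mk]
      -- rewrite each term
      have hterm : ∀ j ∈ Finset.range (n+1),
          coeff j (d⁄dX ℚ treeT) * coeff (n-j) (SS n)
          = ((j:ℚ)+1)^j / ((j.factorial : ℕ) : ℚ) *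
              (((n+1-j:ℕ):ℚ)^(n-j) / (((n+1-j).factorial : ℕ) : ℚ)) := by
        intro j hj
        simp only [Finset.mem_range] at hj
        rw [PowerSeries.coeff_derivative, coeff_treeT, ← coeff_comp (n-j) n (by omega),
          ih (n-j) (by omega)]
        rw [if_neg (Nat.succ_ne_zero j)]
        have e1 : ((n - j : ℕ) : ℚ) + 1 = ((n + 1 - j : ℕ) : ℚ) := by
          have : (n - j) + 1 = n + 1 - j := by omega
          exact_mod_cast congrArg (Nat.cast : ℕ → ℚ) this
        have e2 : (n - j) + 1 = n + 1 - j := by omega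
        rw [e1, e2]
        have e3 : ((j+1).factorial : ℚ) = ((j+1:ℕ):ℚ) * (j.factorial : ℚ) := by
          rw [Nat.factorial_succ]; push_cast; ring
        have h1 : ((j.factorial : ℕ) : ℚ) ≠ 0 := by exact_mod_cast j.factorial_ne_zero
        have h2 : (((n+1-j).factorial : ℕ) : ℚ) ≠ 0 := by
          exact_mod_cast (n+1-j).factorial_ne_zero
        have e4 : j + 1 - 1 = j := by omega
        rw [e4, e3]
        have hj1 : ((j:ℕ):ℚ) + 1 ≠ 0 := by positivity
        push_cast
        field_simp
      rw [Finset.sum_congr rfl hterm, keyId n] at hstep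
      rw [coeff_comp (n+1) (n+1) le_rfl]
      have hfact : (((n+2).factorial : ℕ) : ℚ) = ((n:ℚ)+2) * (((n+1).factorial : ℕ) : ℚ) := by
        rw [Nat.factorial_succ]; push_cast; ring
      have hf1 : (((n+1).factorial : ℕ) : ℚ) ≠ 0 := by exact_mod_cast (n+1).factorial_ne_zero
      have hgoal : coeff (n+1) (SS (n+1))
          = (((n+1:ℕ):ℚ)+1)^(n+1) / (((n+1+1).factorial : ℕ) : ℚ) := by
        have e : (((n+1:ℕ):ℚ)+1) = (n:ℚ)+2 := by push_cast; ring
        have e2 : (n+1+1) = n+2 := by omega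
        rw [e, e2, hfact]
        have hn2 : ((n:ℚ)+2) ≠ 0 := by positivity
        have hn1 : ((n:ℚ)+1) ≠ 0 := by positivity
        have hc : coeff (n+1) (SS (n+1)) = ((n:ℚ)+2)^n / (((n+1).factorial : ℕ) : ℚ) := by
          field_simp at hstep ⊢
          apply mul_right_cancel₀ hn1
          linear_combination ((n:ℚ)+1) * hstep
        rw [hc]
        field_simp
        ring
      exact hgoal

/-- `T(z) = z · exp(T(z))`. -/
theorem treeT_eq_X_mul_exp_treeT :
    treeT = X * psComp (exp ℚ) treeT := by
  ext n
  match n with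
  | 0 =>
    rw [coeff_treeT, if_pos rfl]
    rw [coeff_zero_eq_constantCoeff_apply, map_mul, constantCoeff_X, zero_mul]
  | n + 1 =>
    rw [PowerSeries.coeff_succ_X_mul, coeff_treeT, if_neg (Nat.succ_ne_zero n),
      coeff_psComp_exp n]
    have : n + 1 - 1 = n := by omega
    rw [this]
    push_cast
    ring
end

section
/- Robinson's formula: the number of labeled directed acyclic graphs with n vertices and m edges equals n!·[zⁿ wᵐ] of (1+w)^{C(n,2)} divided by Σ_{k≥0} (1+w)^{−C(k,2)} (−z)^k/k!, where [zⁿ wᵐ] denotes coefficient extraction in the formal power series ring. -/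
open PowerSeries

/-- A digraph edge set on `Fin n` is acyclic if no vertex lies on a directed cycle. -/
def DigraphAcyclic {n : ℕ} (E : Finset (Fin n × Fin n)) : Prop :=
  ∀ i : Fin n, ¬ Relation.TransGen (fun a b : Fin n => (a, b) ∈ E) i i

/-- The number of labeled DAGs with `n` vertices and `m` edges. -/
noncomputable def dagCount (n m : ℕ) : ℕ :=
  Nat.card {E : Finset (Fin n × Fin n) //
    (∀ e ∈ E, e.1 ≠ e.2) ∧ E.card = m ∧ DigraphAcyclic E}

/-- Robinson's denominator `Σ_{k≥0} (1+w)^{−C(k,2)} (−z)^k/k!`, a power series in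
`z` with coefficients rational functions in `w`. -/
noncomputable def robinsonDenom : PowerSeries (RatFunc ℚ) :=
  PowerSeries.mk fun k =>
    (-1) ^ k * ((1 + RatFunc.X) ^ (k.choose 2))⁻¹ / (k.factorial : RatFunc ℚ)

namespace RobinsonAux

open Finset
set_option linter.unusedSectionVars false

variable {α : Type*} [Fintype α] [DecidableEq α]
variable {β : Type*} [Fintype β] [DecidableEq β]
variable {R : Type*} [CommRing R]

open Classical in
noncomputable def dagsOn (V : Finset α) : Finset (Finset (α × α)) :=
  Finset.univ.filter (fun E => (∀ e ∈ E, e.1 ∈ V ∧ e.2 ∈ V ∧ e.1 ≠ e.2) ∧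
    ∀ i, ¬ Relation.TransGen (fun a b => (a, b) ∈ E) i i)

lemma mem_dagsOn {V : Finset α} {E : Finset (α × α)} :
    E ∈ dagsOn V ↔ (∀ e ∈ E, e.1 ∈ V ∧ e.2 ∈ V ∧ e.1 ≠ e.2) ∧
      ∀ i, ¬ Relation.TransGen (fun a b => (a, b) ∈ E) i i := by
  classical simp [dagsOn]

noncomputable def dagSum (x : R) (V : Finset α) : R := ∑ E ∈ dagsOn V, x ^ E.card

lemma transGen_image_pullback {f : α → β} {V : Finset α} {E : Finset (α × α)}
    (hinj : Set.InjOn f ↑V)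
    (hEV : ∀ e ∈ E, e.1 ∈ V ∧ e.2 ∈ V) {x y : β}
    (h : Relation.TransGen (fun a b => (a, b) ∈ E.image (Prod.map f f)) x y) :
    ∀ a b, a ∈ V → b ∈ V → f a = x → f b = y →
      Relation.TransGen (fun a b => (a, b) ∈ E) a b := by
  induction h with
  | single h1 =>
    rename_i c
    intro a b ha hb hfa hfb
    rw [Finset.mem_image] at h1
    obtain ⟨p, hp, hpe⟩ := h1
    have h1 : f p.1 = f a := by simpa [Prod.map, hfa] using congrArg Prod.fst hpe
    have h2 : f p.2 = f b := by simpa [Prod.map, hfb] using congrArg Prod.snd hpe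
    have e1 : p.1 = a := hinj (hEV p hp).1 ha h1
    have e2 : p.2 = b := hinj (hEV p hp).2 hb h2
    exact Relation.TransGen.single (by rwa [← e1, ← e2])
  | tail h1 h2 ih =>
    rename_i c d
    intro a b ha hb hfa hfb
    rw [Finset.mem_image] at h2
    obtain ⟨p, hp, hpe⟩ := h2
    have h3 : f p.1 = c := by simpa [Prod.map] using congrArg Prod.fst hpe
    have h4 : f p.2 = f b := by simpa [Prod.map, hfb] using congrArg Prod.snd hpe
    have e2 : p.2 = b := hinj (hEV p hp).2 hb h4
    exact (ih a p.1 ha (hEV p hp).1 hfa h3).tail (by rwa [← e2])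

lemma image_mem_dagsOn {f : α → β} {V : Finset α} {W : Finset β}
    (hfV : ∀ a ∈ V, f a ∈ W) (hinj : Set.InjOn f ↑V)
    {E : Finset (α × α)} (hE : E ∈ dagsOn V) :
    E.image (Prod.map f f) ∈ dagsOn W := by
  rw [mem_dagsOn] at hE ⊢
  have hEV : ∀ e ∈ E, e.1 ∈ V ∧ e.2 ∈ V := fun e he => ⟨(hE.1 e he).1, (hE.1 e he).2.1⟩
  constructor
  · rintro e he
    rw [Finset.mem_image] at he
    obtain ⟨p, hp, rfl⟩ := he
    refine ⟨hfV _ (hEV p hp).1, hfV _ (hEV p hp).2, fun hc => (hE.1 p hp).2.2 ?_⟩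
    exact hinj (hEV p hp).1 (hEV p hp).2 hc
  · intro i hi
    -- i is the source of the first edge, so i = f a for some a ∈ V
    obtain ⟨j, hj⟩ : ∃ j, (i, j) ∈ E.image (Prod.map f f) := by
      rcases Relation.TransGen.head'_iff.1 hi with ⟨c, h, -⟩; exact ⟨_, h⟩
    rw [Finset.mem_image] at hj
    obtain ⟨p, hp, hpe⟩ := hj
    have h3 : f p.1 = i := by simpa [Prod.map] using congrArg Prod.fst hpe
    exact hE.2 p.1 (transGen_image_pullback hinj hEV hi p.1 p.1
      (hEV p hp).1 (hEV p hp).1 h3 h3)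

lemma dagSum_transfer (x : R) {V : Finset α} {W : Finset β}
    (f : α → β) (g : β → α) (hfV : ∀ a ∈ V, f a ∈ W) (hgW : ∀ b ∈ W, g b ∈ V)
    (hgf : ∀ a ∈ V, g (f a) = a) (hfg : ∀ b ∈ W, f (g b) = b) :
    dagSum x V = dagSum x W := by
  have hinjf : Set.InjOn f ↑V := fun a ha b hb h => by
    rw [← hgf a ha, ← hgf b hb, h]
  have hinjg : Set.InjOn g ↑W := fun a ha b hb h => by
    rw [← hfg a ha, ← hfg b hb, h]
  unfold dagSum
  refine Finset.sum_bij' (fun E _ => E.image (Prod.map f f))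
    (fun E _ => E.image (Prod.map g g))
    (fun E hE => image_mem_dagsOn hfV hinjf hE)
    (fun E hE => image_mem_dagsOn hgW hinjg hE)
    ?_ ?_ ?_
  · intro E hE
    rw [Finset.image_image]
    rw [mem_dagsOn] at hE
    have : ∀ p ∈ E, (Prod.map g g ∘ Prod.map f f) p = p := by
      intro p hp
      have h1 := (hE.1 p hp).1
      have h2 := (hE.1 p hp).2.1
      simp [Prod.map, hgf _ h1, hgf _ h2]
    rw [Finset.image_congr (fun p hp => this p hp)]
    exact Finset.image_id
  · intro E hE
    rw [Finset.image_image]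
    rw [mem_dagsOn] at hE
    have : ∀ p ∈ E, (Prod.map f f ∘ Prod.map g g) p = p := by
      intro p hp
      have h1 := (hE.1 p hp).1
      have h2 := (hE.1 p hp).2.1
      simp [Prod.map, hfg _ h1, hfg _ h2]
    rw [Finset.image_congr (fun p hp => this p hp)]
    exact Finset.image_id
  · intro E hE
    rw [mem_dagsOn] at hE
    congr 1
    rw [Finset.card_image_of_injOn]
    intro p hp q hq h
    have hp1 := (hE.1 p hp); have hq1 := (hE.1 q hq)
    have e1 : f p.1 = f q.1 := by simpa [Prod.map] using congrArg Prod.fst h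
    have e2 : f p.2 = f q.2 := by simpa [Prod.map] using congrArg Prod.snd h
    exact Prod.ext (hinjf hp1.1 hq1.1 e1) (hinjf hp1.2.1 hq1.2.1 e2)

lemma dagsOn_empty : dagsOn (∅ : Finset α) = {∅} := by
  ext E
  rw [mem_dagsOn]
  simp only [Finset.notMem_empty, false_and, Finset.mem_singleton]
  constructor
  · rintro ⟨h1, -⟩
    exact Finset.eq_empty_of_forall_notMem fun p hp => h1 p hp
  · rintro rfl
    refine ⟨fun p hp => absurd hp (Finset.notMem_empty p), fun i hi => ?_⟩
    cases hi with
    | single h => exact absurd h (Finset.notMem_empty _)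
    | tail h1 h2 => exact absurd h2 (Finset.notMem_empty _)

lemma dagSum_empty (x : R) : dagSum x (∅ : Finset α) = 1 := by
  simp [dagSum, dagsOn_empty]

/-- dagSum only depends on the cardinality of the vertex set. -/
lemma dagSum_card_eq (x : R) {V : Finset α} {W : Finset β}
    (h : V.card = W.card) : dagSum x V = dagSum x W := by
  rcases V.eq_empty_or_nonempty with rfl | hV
  · have : W = ∅ := Finset.card_eq_zero.1 (by simp [← h])
    subst this
    rw [dagSum_empty, dagSum_empty]
  · have hW : W.Nonempty := by
      rw [← Finset.card_pos, ← h, Finset.card_pos]; exact hV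
    obtain ⟨a0, ha0⟩ := hV
    obtain ⟨b0, hb0⟩ := hW
    have e : {a // a ∈ V} ≃ {b // b ∈ W} := by
      apply Fintype.equivOfCardEq
      rwa [Fintype.card_coe, Fintype.card_coe]
    classical
    refine dagSum_transfer x
      (fun a => if h : a ∈ V then (e ⟨a, h⟩ : β) else b0)
      (fun b => if h : b ∈ W then (e.symm ⟨b, h⟩ : α) else a0)
      ?_ ?_ ?_ ?_
    · intro a ha; simp only [dif_pos ha]; exact (e ⟨a, ha⟩).2
    · intro b hb; simp only [dif_pos hb]; exact (e.symm ⟨b, hb⟩).2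
    · intro a ha
      simp only [dif_pos ha, dif_pos (e ⟨a, ha⟩).2]
      rw [show (⟨(e ⟨a, ha⟩ : β), (e ⟨a, ha⟩).2⟩ : {b // b ∈ W}) = e ⟨a, ha⟩ from rfl,
        Equiv.symm_apply_apply]
    · intro b hb
      simp only [dif_pos hb, dif_pos (e.symm ⟨b, hb⟩).2]
      rw [show (⟨(e.symm ⟨b, hb⟩ : α), (e.symm ⟨b, hb⟩).2⟩ : {a // a ∈ V}) = e.symm ⟨b, hb⟩ from rfl,
        Equiv.apply_symm_apply]

lemma sum_powerset_pow_card {γ : Type*} [DecidableEq γ] (x : R) (u : Finset γ) :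
    ∑ s ∈ u.powerset, x ^ s.card = (1 + x) ^ u.card := by
  induction u using Finset.induction_on with
  | empty => simp
  | @insert a u ha ih =>
    rw [Finset.powerset_insert, Finset.sum_union, Finset.sum_image]
    · have h1 : ∀ s ∈ u.powerset, x ^ (insert a s).card = x * x ^ s.card := by
        intro s hs
        have hs' : a ∉ s := fun h' => ha (Finset.mem_powerset.1 hs h')
        rw [Finset.card_insert_of_notMem hs', pow_succ, mul_comm]
      rw [Finset.sum_congr rfl h1, ← Finset.mul_sum, ih,
        Finset.card_insert_of_notMem ha, pow_succ]
      ring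
    · intro s hs t ht h
      have hs' : a ∉ s := fun h' => ha (Finset.mem_powerset.1 hs h')
      have ht' : a ∉ t := fun h' => ha (Finset.mem_powerset.1 ht h')
      have := congrArg (·.erase a) h
      simpa [Finset.erase_insert hs', Finset.erase_insert ht'] using this
    · rw [Finset.disjoint_left]
      intro s hs hs'
      rw [Finset.mem_image] at hs'
      obtain ⟨t, ht, rfl⟩ := hs'
      exact ha (Finset.mem_powerset.1 hs (Finset.mem_insert_self a t))

/-- Key acyclicity transfer: if every edge with source outside `T` lies in `E₂`,
and every edge target is outside `T`, then cycles of `E` give cycles of `E₂`. -/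
lemma acyclic_of_sub {T : Finset α} {E E₂ : Finset (α × α)}
    (hsub : ∀ e ∈ E, e.1 ∉ T → e ∈ E₂) (htgt : ∀ e ∈ E, e.2 ∉ T)
    {i : α} (hi : Relation.TransGen (fun a b => (a, b) ∈ E) i i) :
    Relation.TransGen (fun a b => (a, b) ∈ E₂) i i := by
  have aux : ∀ a b, Relation.TransGen (fun a b => (a, b) ∈ E) a b → b ∉ T := by
    intro a b h
    induction h with
    | single h => exact htgt _ h
    | tail h1 h2 ih => exact htgt _ h2
  have claim : ∀ a b, Relation.TransGen (fun a b => (a, b) ∈ E) a b → a ∉ T →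
      Relation.TransGen (fun a b => (a, b) ∈ E₂) a b := by
    intro a b h
    induction h with
    | single h => exact fun ha => Relation.TransGen.single (hsub _ h ha)
    | @tail b c h1 h2 ih =>
      intro ha
      exact (ih ha).tail (hsub _ h2 (aux _ _ h1))
  exact claim i i hi (aux i i hi)

open Classical in
/-- The split lemma: DAGs on `V` in which no edge enters `T` correspond to a
subset of `T × (V\T)` edges together with a DAG on `V \ T`. -/
lemma split_sum (x : R) {T V : Finset α} (hTV : T ⊆ V) :
    ∑ E ∈ (dagsOn V).filter (fun E => ∀ e ∈ E, e.2 ∉ T), x ^ E.card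
      = (1 + x) ^ (T.card * (V \ T).card) * dagSum x (V \ T) := by
  classical
  have key : ∑ E ∈ (dagsOn V).filter (fun E => ∀ e ∈ E, e.2 ∉ T), x ^ E.card
      = ∑ p ∈ (T ×ˢ (V \ T)).powerset ×ˢ dagsOn (V \ T), x ^ (p.1.card + p.2.card) := by
    refine Finset.sum_bij' (fun E _ => (E.filter (fun e => e.1 ∈ T), E.filter (fun e => e.1 ∉ T)))
      (fun p _ => p.1 ∪ p.2) ?_ ?_ ?_ ?_ ?_
    · -- forward map lands in B
      intro E hE
      rw [Finset.mem_filter, mem_dagsOn] at hE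
      obtain ⟨⟨h1, h2⟩, h3⟩ := hE
      rw [Finset.mem_product]
      constructor
      · rw [Finset.mem_powerset]
        intro e he
        rw [Finset.mem_filter] at he
        rw [Finset.mem_product]
        exact ⟨he.2, Finset.mem_sdiff.2 ⟨(h1 e he.1).2.1, h3 e he.1⟩⟩
      · rw [mem_dagsOn]
        constructor
        · intro e he
          rw [Finset.mem_filter] at he
          exact ⟨Finset.mem_sdiff.2 ⟨(h1 e he.1).1, he.2⟩,
            Finset.mem_sdiff.2 ⟨(h1 e he.1).2.1, h3 e he.1⟩, (h1 e he.1).2.2⟩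
        · intro i hi
          exact h2 i (Relation.TransGen.mono (fun a b hab => (Finset.mem_filter.1 hab).1) _ _ hi)
    · -- backward map lands in A
      intro p hp
      rw [Finset.mem_product, Finset.mem_powerset, mem_dagsOn] at hp
      obtain ⟨hp1, hp2, hp3⟩ := hp
      have hE1 : ∀ e ∈ p.1, e.1 ∈ T ∧ e.2 ∈ V \ T := by
        intro e he
        have := hp1 he
        rw [Finset.mem_product] at this
        exact this
      rw [Finset.mem_filter, mem_dagsOn]
      refine ⟨⟨?_, ?_⟩, ?_⟩
      · intro e he
        rcases Finset.mem_union.1 he with h | h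
        · obtain ⟨ha, hb⟩ := hE1 e h
          refine ⟨hTV ha, (Finset.mem_sdiff.1 hb).1, ?_⟩
          intro hc
          exact (Finset.mem_sdiff.1 hb).2 (hc ▸ ha)
        · obtain ⟨ha, hb, hc⟩ := hp2 e h
          exact ⟨(Finset.mem_sdiff.1 ha).1, (Finset.mem_sdiff.1 hb).1, hc⟩
      · intro i hi
        refine hp3 i (acyclic_of_sub (T := T) ?_ ?_ hi)
        · intro e he h1
          rcases Finset.mem_union.1 he with h | h
          · exact absurd (hE1 e h).1 h1
          · exact h
        · intro e he
          rcases Finset.mem_union.1 he with h | h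
          · exact (Finset.mem_sdiff.1 (hE1 e h).2).2
          · exact (Finset.mem_sdiff.1 (hp2 e h).2.1).2
      · intro e he
        rcases Finset.mem_union.1 he with h | h
        · exact (Finset.mem_sdiff.1 (hE1 e h).2).2
        · exact (Finset.mem_sdiff.1 (hp2 e h).2.1).2
    · -- left inverse
      intro E hE
      dsimp only
      exact Finset.filter_union_filter_not_eq _ E
    · -- right inverse
      intro p hp
      rw [Finset.mem_product, Finset.mem_powerset, mem_dagsOn] at hp
      obtain ⟨hp1, hp2, hp3⟩ := hp
      have hs1 : ∀ e ∈ p.1, e.1 ∈ T := by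
        intro e he
        have := hp1 he
        rw [Finset.mem_product] at this
        exact this.1
      have hs2 : ∀ e ∈ p.2, e.1 ∉ T := by
        intro e he
        exact (Finset.mem_sdiff.1 (hp2 e he).1).2
      have e1 : (p.1 ∪ p.2).filter (fun e => e.1 ∈ T) = p.1 := by
        ext e
        simp only [Finset.mem_filter, Finset.mem_union]
        constructor
        · rintro ⟨h | h, h2⟩
          · exact h
          · exact absurd h2 (hs2 e h)
        · intro h
          exact ⟨Or.inl h, hs1 e h⟩
      have e2 : (p.1 ∪ p.2).filter (fun e => e.1 ∉ T) = p.2 := by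
        ext e
        simp only [Finset.mem_filter, Finset.mem_union]
        constructor
        · rintro ⟨h | h, h2⟩
          · exact absurd (hs1 e h) h2
          · exact h
        · intro h
          exact ⟨Or.inr h, hs2 e h⟩
      rw [e1, e2]
    · -- values agree
      intro E hE
      dsimp only
      congr 1
      rw [Finset.card_filter_add_card_filter_not]
  rw [key, Finset.sum_product]
  have : ∀ p1 ∈ (T ×ˢ (V \ T)).powerset, ∑ p2 ∈ dagsOn (V \ T), x ^ (p1.card + p2.card)
      = x ^ p1.card * dagSum x (V \ T) := by
    intro p1 _
    rw [dagSum, Finset.mul_sum]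
    exact Finset.sum_congr rfl fun p2 _ => pow_add x _ _
  rw [Finset.sum_congr rfl this, ← Finset.sum_mul, sum_powerset_pow_card,
    Finset.card_product]

lemma exists_source {V : Finset α} (hV : V.Nonempty) {E : Finset (α × α)}
    (hE : E ∈ dagsOn V) : ∃ v ∈ V, ∀ e ∈ E, e.2 ≠ v := by
  rw [mem_dagsOn] at hE
  set r : α → α → Prop := fun a b => (a, b) ∈ E with hr
  have : IsTrans α (Relation.TransGen r) := ⟨fun _ _ _ => Relation.TransGen.trans⟩
  have : IsIrrefl α (Relation.TransGen r) := ⟨hE.2⟩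
  have hwf : WellFounded (Relation.TransGen r) :=
    Finite.wellFounded_of_trans_of_irrefl _
  obtain ⟨v, hvV, hmin⟩ := hwf.has_min ↑V (by exact_mod_cast hV)
  refine ⟨v, hvV, fun e he h2 => ?_⟩
  have h1 : e.1 ∈ V := (hE.1 e he).1
  exact hmin e.1 h1 (Relation.TransGen.single (by simpa [hr, ← h2] using he))

open Classical in
lemma recurrence (x : R) {n : ℕ} (hn : 0 < n) :
    ∑ k ∈ Finset.range (n + 1), (n.choose k : R) • ((-1 : R) ^ k * (1 + x) ^ (k * (n - k)) *
      dagSum x (Finset.univ : Finset (Fin (n - k)))) = 0 := by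
  classical
  set V : Finset (Fin n) := Finset.univ with hV
  have hVcard : V.card = n := by simp [hV]
  have hVne : V.Nonempty := ⟨⟨0, hn⟩, Finset.mem_univ _⟩
  set F : ℕ → R := fun j => (-1 : R) ^ j * (1 + x) ^ (j * (n - j)) *
    dagSum x (Finset.univ : Finset (Fin (n - j))) with hF
  have claimA : ∀ T ∈ V.powerset,
      (-1 : R) ^ T.card *
        ∑ E ∈ (dagsOn V).filter (fun E => ∀ e ∈ E, e.2 ∉ T), x ^ E.card = F T.card := by
    intro T hT
    rw [Finset.mem_powerset] at hT
    rw [split_sum x hT]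
    have h1 : (V \ T).card = n - T.card := by
      rw [Finset.card_sdiff_of_subset hT, hVcard]
    have h2 : dagSum x (V \ T) = dagSum x (Finset.univ : Finset (Fin (n - T.card))) := by
      apply dagSum_card_eq
      simp [h1]
    rw [h2, h1]
    simp only [hF]
    ring
  have claimB : ∑ T ∈ V.powerset, (-1 : R) ^ T.card *
      ∑ E ∈ (dagsOn V).filter (fun E => ∀ e ∈ E, e.2 ∉ T), x ^ E.card = 0 := by
    have expand : ∀ T ∈ V.powerset, (-1 : R) ^ T.card *
        ∑ E ∈ (dagsOn V).filter (fun E => ∀ e ∈ E, e.2 ∉ T), x ^ E.card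
        = ∑ E ∈ dagsOn V, if (∀ e ∈ E, e.2 ∉ T) then (-1 : R) ^ T.card * x ^ E.card else 0 := by
      intro T _
      rw [Finset.sum_filter, Finset.mul_sum]
      exact Finset.sum_congr rfl fun E _ => by split <;> simp
    rw [Finset.sum_congr rfl expand, Finset.sum_comm]
    refine Finset.sum_eq_zero fun E hE => ?_
    have hidx : V.powerset.filter (fun T => ∀ e ∈ E, e.2 ∉ T)
        = (V.filter (fun v => ∀ e ∈ E, e.2 ≠ v)).powerset := by
      ext T
      simp only [Finset.mem_filter, Finset.mem_powerset]
      constructor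
      · rintro ⟨h1, h2⟩ v hv
        exact Finset.mem_filter.2 ⟨h1 hv, fun e he heq => h2 e he (heq ▸ hv)⟩
      · intro h
        refine ⟨fun v hv => (Finset.mem_filter.1 (h hv)).1,
          fun e he hT => (Finset.mem_filter.1 (h hT)).2 e he rfl⟩
    have hsrc : (V.filter (fun v => ∀ e ∈ E, e.2 ≠ v)).Nonempty := by
      obtain ⟨v, hv1, hv2⟩ := exists_source hVne hE
      exact ⟨v, Finset.mem_filter.2 ⟨hv1, hv2⟩⟩
    calc ∑ T ∈ V.powerset, (if (∀ e ∈ E, e.2 ∉ T) then (-1 : R) ^ T.card * x ^ E.card else 0)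
        = ∑ T ∈ V.powerset.filter (fun T => ∀ e ∈ E, e.2 ∉ T), (-1 : R) ^ T.card * x ^ E.card :=
          (Finset.sum_filter _ _).symm
      _ = (∑ T ∈ (V.filter (fun v => ∀ e ∈ E, e.2 ≠ v)).powerset, (-1 : R) ^ T.card) * x ^ E.card := by
          rw [hidx, Finset.sum_mul]
      _ = 0 := by
          have hz : (∑ T ∈ (V.filter (fun v => ∀ e ∈ E, e.2 ≠ v)).powerset, (-1 : R) ^ T.card) = 0 := by
            have := Finset.sum_powerset_neg_one_pow_card_of_nonempty hsrc
            have hcast := congrArg (fun z : ℤ => (z : R)) this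
            push_cast at hcast
            simpa using hcast
          rw [hz, zero_mul]
  have := claimB
  rw [Finset.sum_congr rfl claimA, Finset.sum_powerset_apply_card, hVcard] at this
  simpa [hF] using this

lemma choose_two_add (k j : ℕ) : (k + j).choose 2 = k.choose 2 + j.choose 2 + k * j := by
  induction j with
  | zero => simp
  | succ j ih =>
    have h1 : ∀ m : ℕ, (m + 1).choose 2 = m.choose 2 + m := by
      intro m
      rw [Nat.choose_succ_succ, Nat.choose_one_right, Nat.add_comm]
    have h2 := h1 (k + j)
    have h3 := h1 j
    have : k + (j + 1) = (k + j) + 1 := by ring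
    rw [this, h2, ih, h3]
    ring

/-- The edge generating function of DAGs on `n` vertices, as a rational function. -/
noncomputable def aRat (k : ℕ) : RatFunc ℚ :=
  dagSum RatFunc.X (Finset.univ : Finset (Fin k))

/-- The exponential-type generating function `Σ aRat k z^k/(k! (1+w)^{C(k,2)})`. -/
noncomputable def robinsonNum : PowerSeries (RatFunc ℚ) :=
  PowerSeries.mk fun k =>
    ((k.factorial : RatFunc ℚ) * (1 + RatFunc.X) ^ (k.choose 2))⁻¹ * aRat k

lemma one_add_X_ne_zero : (1 + RatFunc.X : RatFunc ℚ) ≠ 0 := by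
  have : (1 + RatFunc.X : RatFunc ℚ) = algebraMap (Polynomial ℚ) (RatFunc ℚ) (1 + Polynomial.X) := by
    rw [map_add, map_one, RatFunc.algebraMap_X]
  rw [this]
  refine RatFunc.algebraMap_ne_zero ?_
  intro h
  have := congrArg (fun p => Polynomial.coeff p 1) h
  simp [Polynomial.coeff_one] at this


lemma natCast_ne_zero' {k : ℕ} (hk : k ≠ 0) : (k : RatFunc ℚ) ≠ 0 := by
  rw [show ((k : RatFunc ℚ)) = algebraMap (Polynomial ℚ) (RatFunc ℚ) (k : Polynomial ℚ)
    by rw [map_natCast]]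
  refine RatFunc.algebraMap_ne_zero ?_
  exact_mod_cast Nat.cast_ne_zero.2 hk

lemma num_mul_denom : robinsonNum * robinsonDenom = 1 := by
  rw [mul_comm]
  ext n
  rw [PowerSeries.coeff_mul, Finset.Nat.sum_antidiagonal_eq_sum_range_succ_mk]
  rcases Nat.eq_zero_or_pos n with rfl | hn
  · have ha0 : aRat 0 = 1 := by
      have : (Finset.univ : Finset (Fin 0)) = ∅ := rfl
      rw [aRat, this, dagSum_empty]
    simp [robinsonDenom, robinsonNum, ha0, PowerSeries.coeff_mk, PowerSeries.coeff_one]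
  · set u : RatFunc ℚ := 1 + RatFunc.X with hu_def
    have hu : u ≠ 0 := one_add_X_ne_zero
    have hterm : ∀ k ∈ Finset.range (n + 1),
        (PowerSeries.coeff k robinsonDenom) * (PowerSeries.coeff (n - k) robinsonNum)
        = ((n.factorial : RatFunc ℚ) * u ^ n.choose 2)⁻¹ *
          ((n.choose k : RatFunc ℚ) *
            ((-1 : RatFunc ℚ) ^ k * u ^ (k * (n - k)) * aRat (n - k))) := by
      intro k hk
      have hkn : k ≤ n := Nat.lt_succ_iff.1 (Finset.mem_range.1 hk)
      rw [robinsonDenom, robinsonNum, PowerSeries.coeff_mk, PowerSeries.coeff_mk]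
      have hch : (n.factorial : RatFunc ℚ)
          = (n.choose k : RatFunc ℚ) * (k.factorial : RatFunc ℚ)
            * ((n - k).factorial : RatFunc ℚ) := by
        rw [← Nat.choose_mul_factorial_mul_factorial hkn]
        push_cast
        ring
      have hpow : u ^ n.choose 2 = u ^ k.choose 2 * u ^ (n - k).choose 2 * u ^ (k * (n - k)) := by
        rw [← pow_add, ← pow_add]
        congr 1
        have := choose_two_add k (n - k)
        rw [Nat.add_sub_cancel' hkn] at this
        omega
      have hD1 : (u ^ k.choose 2 * (k.factorial : RatFunc ℚ))
          * (((n - k).factorial : RatFunc ℚ) * u ^ (n - k).choose 2) ≠ 0 := by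
        refine mul_ne_zero (mul_ne_zero (pow_ne_zero _ hu) ?_) (mul_ne_zero ?_ (pow_ne_zero _ hu))
        · exact natCast_ne_zero' k.factorial_ne_zero
        · exact natCast_ne_zero' (n - k).factorial_ne_zero
      have hD2 : (n.factorial : RatFunc ℚ) * u ^ n.choose 2 ≠ 0 :=
        mul_ne_zero (natCast_ne_zero' n.factorial_ne_zero) (pow_ne_zero _ hu)
      calc ((-1 : RatFunc ℚ) ^ k * (u ^ k.choose 2)⁻¹ / (k.factorial : RatFunc ℚ))
            * ((((n - k).factorial : RatFunc ℚ) * u ^ (n - k).choose 2)⁻¹ * aRat (n - k))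
          = ((-1 : RatFunc ℚ) ^ k * aRat (n - k))
            / ((u ^ k.choose 2 * (k.factorial : RatFunc ℚ))
              * (((n - k).factorial : RatFunc ℚ) * u ^ (n - k).choose 2)) := by
            rw [div_eq_mul_inv, div_eq_mul_inv, mul_inv, mul_inv, mul_inv]
            ring
        _ = ((n.choose k : RatFunc ℚ) *
              ((-1 : RatFunc ℚ) ^ k * u ^ (k * (n - k)) * aRat (n - k)))
            / ((n.factorial : RatFunc ℚ) * u ^ n.choose 2) := by
            rw [div_eq_div_iff hD1 hD2, hch, hpow]
            ring
        _ = ((n.factorial : RatFunc ℚ) * u ^ n.choose 2)⁻¹ *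
              ((n.choose k : RatFunc ℚ) *
                ((-1 : RatFunc ℚ) ^ k * u ^ (k * (n - k)) * aRat (n - k))) := by
            rw [div_eq_mul_inv, mul_comm]
    rw [Finset.sum_congr rfl hterm, ← Finset.mul_sum]
    have hrec := recurrence (R := RatFunc ℚ) RatFunc.X hn
    have hrec' : ∑ k ∈ Finset.range (n + 1),
        ((n.choose k : RatFunc ℚ) *
          ((-1 : RatFunc ℚ) ^ k * u ^ (k * (n - k)) * aRat (n - k))) = 0 := by
      rw [← hrec]
      refine Finset.sum_congr rfl fun k _ => ?_
      rw [smul_eq_mul]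
      rfl
    rw [hrec', mul_zero, PowerSeries.coeff_one, if_neg hn.ne']

lemma denom_inv : robinsonDenom⁻¹ = robinsonNum := by
  have hc : PowerSeries.constantCoeff robinsonDenom ≠ 0 := by
    have : PowerSeries.constantCoeff robinsonDenom = 1 := by
      rw [← PowerSeries.coeff_zero_eq_constantCoeff, robinsonDenom, PowerSeries.coeff_mk]
      simp
    rw [this]
    exact one_ne_zero
  rw [PowerSeries.inv_eq_iff_mul_eq_one hc]
  exact num_mul_denom

lemma coeff_formula (n : ℕ) :
    PowerSeries.coeff (R := RatFunc ℚ) n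
      (PowerSeries.C (R := RatFunc ℚ) ((1 + RatFunc.X) ^ (n.choose 2)) * robinsonDenom⁻¹)
    = (n.factorial : RatFunc ℚ)⁻¹ * aRat n := by
  rw [denom_inv, PowerSeries.coeff_C_mul, robinsonNum, PowerSeries.coeff_mk, mul_inv,
    ← mul_assoc]
  congr 1
  rw [mul_comm, mul_assoc, inv_mul_cancel₀ (pow_ne_zero _ one_add_X_ne_zero), mul_one]

open Classical in
lemma dagCount_eq (n m : ℕ) : dagCount n m
    = ((dagsOn (Finset.univ : Finset (Fin n))).filter (fun E => E.card = m)).card := by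
  classical
  rw [dagCount, Nat.card_eq_fintype_card, Fintype.card_subtype]
  congr 1
  ext E
  simp only [Finset.mem_filter, Finset.mem_univ, true_and, mem_dagsOn]
  unfold DigraphAcyclic
  tauto

lemma laurent_coeff_aRat (n : ℕ) (m : ℕ) :
    ((aRat n : RatFunc ℚ) : LaurentSeries ℚ).coeff (m : ℤ) = (dagCount n m : ℚ) := by
  classical
  rw [aRat, dagSum, map_sum]
  have h1 : ∀ E ∈ dagsOn (Finset.univ : Finset (Fin n)),
      ((RatFunc.X ^ E.card : RatFunc ℚ) : LaurentSeries ℚ)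
        = HahnSeries.single (E.card : ℤ) (1 : ℚ) := by
    intro E _
    rw [map_pow]
    have hX : ((RatFunc.X : RatFunc ℚ) : LaurentSeries ℚ) = HahnSeries.single (1 : ℤ) (1 : ℚ) := by
      exact RatFunc.coe_X
    rw [hX, HahnSeries.single_pow]
    norm_num
  rw [Finset.sum_congr rfl h1]
  have h2 : (∑ E ∈ dagsOn (Finset.univ : Finset (Fin n)),
        HahnSeries.single (E.card : ℤ) (1 : ℚ)).coeff (m : ℤ)
      = ∑ E ∈ dagsOn (Finset.univ : Finset (Fin n)),
        (HahnSeries.single (E.card : ℤ) (1 : ℚ)).coeff (m : ℤ) :=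
    map_sum (HahnSeries.coeff.addMonoidHom (m : ℤ)) _ _
  rw [h2]
  have h3 : ∀ E ∈ dagsOn (Finset.univ : Finset (Fin n)),
      (HahnSeries.single (E.card : ℤ) (1 : ℚ)).coeff (m : ℤ)
        = if E.card = m then (1 : ℚ) else 0 := by
    intro E _
    rw [HahnSeries.coeff_single]
    congr 1
    simp only [eq_iff_iff]
    constructor
    · intro h; exact_mod_cast h.symm
    · intro h; exact_mod_cast h.symm
  rw [Finset.sum_congr rfl h3, Finset.sum_boole, dagCount_eq]

lemma laurent_coeff_main (n m : ℕ) :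
    ((((n.factorial : RatFunc ℚ)⁻¹ * aRat n : RatFunc ℚ)) : LaurentSeries ℚ).coeff (m : ℤ)
      = ((n.factorial : ℚ))⁻¹ * (dagCount n m : ℚ) := by
  rw [map_mul]
  have h1 : (((n.factorial : RatFunc ℚ)⁻¹ : RatFunc ℚ) : LaurentSeries ℚ)
      = HahnSeries.C (((n.factorial : ℚ))⁻¹ : ℚ) := by
    rw [map_inv₀, map_natCast, ← map_natCast (HahnSeries.C : ℚ →+* LaurentSeries ℚ),
      ← map_inv₀]
  rw [h1]
  have h2 : (HahnSeries.C (((n.factorial : ℚ))⁻¹ : ℚ) * ((aRat n : RatFunc ℚ) : LaurentSeries ℚ)).coeff (m : ℤ)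
      = ((n.factorial : ℚ))⁻¹ * ((aRat n : RatFunc ℚ) : LaurentSeries ℚ).coeff (m : ℤ) := by
    rw [HahnSeries.C_apply, HahnSeries.coeff_single_zero_mul]
  rw [h2, laurent_coeff_aRat]

end RobinsonAux

/-- Robinson's formula: `DAG_{n,m} = n!·[zⁿ wᵐ] (1+w)^{C(n,2)} / Σ_k (1+w)^{−C(k,2)}(−z)^k/k!`,
the inner coefficient (a rational function of `w`) being expanded as a formal Laurent series in `w`. -/
theorem robinson_formula (n m : ℕ) :
    (dagCount n m : ℚ) =
      (n.factorial : ℚ) *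
        ((coeff (R := RatFunc ℚ) n
            (PowerSeries.C (R := RatFunc ℚ) ((1 + RatFunc.X) ^ (n.choose 2)) *
              robinsonDenom⁻¹) : LaurentSeries ℚ).coeff m) := by
  rw [RobinsonAux.coeff_formula, RobinsonAux.laurent_coeff_main, ← mul_assoc,
    mul_inv_cancel₀ (Nat.cast_ne_zero.2 n.factorial_ne_zero : (n.factorial : ℚ) ≠ 0), one_mul]
end

section
/- Defining DAG^(z,w) = 1/(Σ_{n≥0} (1+w)^{−C(n,2)} (−z)ⁿ/n!) as a formal power series in z, the coefficient of zⁿ/n! in DAG^(z,w), multiplied by (1+w)^{C(n,2)}, is a polynomial in w with nonnegative integer coefficients (namely, the counting polynomial Σₘ DAG_{n,m} wᵐ of DAGs by edges). -/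
open PowerSeries

/-- The graphic generating function of DAGs,
`DAG^(z,w) = 1/(Σ_{k≥0} (1+w)^{−C(k,2)} (−z)^k/k!)`. -/
noncomputable def dagGGF : PowerSeries (RatFunc ℚ) :=
  (PowerSeries.mk fun k =>
    (-1) ^ k * ((1 + RatFunc.X) ^ (k.choose 2))⁻¹ / (k.factorial : RatFunc ℚ))⁻¹

namespace DagAux

open Finset Relation

noncomputable abbrev K : Type := RatFunc ℚ
noncomputable abbrev w : K := RatFunc.X

/-- edge relation of an edge set -/
def er {α : Type} (E : Finset (α × α)) : α → α → Prop := fun a b => (a, b) ∈ E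

/-- acyclicity, general -/
def Acy {α : Type} (E : Finset (α × α)) : Prop := ∀ i, ¬ TransGen (er E) i i

/-- the set of acyclic edge sets supported on `T` -/
noncomputable def dagF (n : ℕ) (T : Finset (Fin n)) : Finset (Finset (Fin n × Fin n)) :=
  @Finset.filter _ (fun E => Acy E) (Classical.decPred _) (T ×ˢ T).powerset

/-- counting polynomial (as a rational function in `w`) of DAGs on `T` -/
noncomputable def AOn (n : ℕ) (T : Finset (Fin n)) : K :=
  ∑ E ∈ dagF n T, w ^ E.card

/-- counting polynomial of DAGs on `Fin n` -/
noncomputable def P (n : ℕ) : K := AOn n univ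

lemma acy_subset {α : Type} {E E' : Finset (α × α)} (hsub : E' ⊆ E) (hE : Acy E) : Acy E' :=
  fun i h => hE i (TransGen.mono (r := er E') (p := er E) (fun a b hab => hsub hab) i i h)

lemma acy_empty {α : Type} : Acy (∅ : Finset (α × α)) := by
  intro i h
  cases h with
  | single h => exact absurd h (Finset.notMem_empty _)
  | tail _ h => exact absurd h (Finset.notMem_empty _)

lemma acy_loopless {α : Type} {E : Finset (α × α)} (hE : Acy E) {e : α × α} (he : e ∈ E) :
    e.1 ≠ e.2 := by
  intro hc
  have he' : (e.1, e.1) ∈ E := by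
    have : e = (e.1, e.1) := by rw [Prod.ext_iff]; exact ⟨rfl, hc.symm⟩
    rwa [this] at he
  exact hE e.1 (TransGen.single he')

lemma transGen_image_pullback {α β : Type} [DecidableEq β] (f : α → β) (hf : Function.Injective f)
    (E : Finset (α × α)) {a b : β}
    (h : TransGen (er ((E.image (Prod.map f f)))) a b) :
    ∃ a' b', a = f a' ∧ b = f b' ∧ TransGen (er E) a' b' := by
  induction h with
  | single hedge =>
    obtain ⟨⟨a', b'⟩, hmem, heq⟩ := Finset.mem_image.1 hedge
    exact ⟨a', b', (congrArg Prod.fst heq).symm, (congrArg Prod.snd heq).symm,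
      TransGen.single hmem⟩
  | tail _ hedge ih =>
    obtain ⟨a', c', rfl, rfl, ht⟩ := ih
    obtain ⟨⟨c'', b'⟩, hmem, heq⟩ := Finset.mem_image.1 hedge
    have hc : c'' = c' := hf (congrArg Prod.fst heq)
    exact ⟨a', b', rfl, (congrArg Prod.snd heq).symm, ht.tail (hc ▸ hmem)⟩

lemma acy_image {α β : Type} [DecidableEq β] (f : α → β) (hf : Function.Injective f)
    (E : Finset (α × α)) (hE : Acy E) : Acy (E.image (Prod.map f f)) := by
  intro i h
  obtain ⟨a', b', ha, hb, ht⟩ := transGen_image_pullback f hf E h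
  have : a' = b' := hf (ha ▸ hb)
  exact hE a' (this ▸ ht)

lemma mem_dagF {n : ℕ} {T : Finset (Fin n)} {E : Finset (Fin n × Fin n)} :
    E ∈ dagF n T ↔ E ⊆ T ×ˢ T ∧ Acy E := by
  rw [dagF, @Finset.mem_filter _ _ (Classical.decPred _), Finset.mem_powerset]

lemma AOn_card (n : ℕ) (T : Finset (Fin n)) : AOn n T = P T.card := by
  classical
  set k := T.card with hk
  set f : Fin k → Fin n := fun i => ((T.orderIsoOfFin rfl) i : Fin n) with hf
  have hfinj : Function.Injective f := fun a b hab =>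
    (T.orderIsoOfFin rfl).injective (Subtype.ext hab)
  have hfT : ∀ i, f i ∈ T := fun i => ((T.orderIsoOfFin rfl) i).2
  have hfsurj : ∀ x ∈ T, ∃ i, f i = x := fun x hx =>
    ⟨(T.orderIsoOfFin rfl).symm ⟨x, hx⟩, by
      show ((T.orderIsoOfFin rfl) ((T.orderIsoOfFin rfl).symm ⟨x, hx⟩) : Fin n) = x
      rw [OrderIso.apply_symm_apply]⟩
  have hp : Function.Injective (Prod.map f f) := hfinj.prodMap hfinj
  rw [AOn, P, AOn]
  symm
  refine Finset.sum_bij' (fun E _ => E.image (Prod.map f f))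
    (fun E _ => E.preimage (Prod.map f f) hp.injOn) ?_ ?_ ?_ ?_ ?_
  · intro E hE
    obtain ⟨_, hacy⟩ := mem_dagF.1 hE
    refine mem_dagF.2 ⟨?_, acy_image f hfinj E hacy⟩
    intro e he
    obtain ⟨⟨a, b⟩, _, rfl⟩ := Finset.mem_image.1 he
    exact Finset.mem_product.2 ⟨hfT a, hfT b⟩
  · intro E hE
    obtain ⟨_, hacy⟩ := mem_dagF.1 hE
    refine mem_dagF.2 ⟨by simp [Finset.subset_univ], ?_⟩
    intro i h
    have : TransGen (er E) (f i) (f i) :=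
      Relation.TransGen.lift (r := er (E.preimage (Prod.map f f) hp.injOn)) (p := er E) f
        (fun a b hab => by
          have h1 : (a, b) ∈ E.preimage (Prod.map f f) hp.injOn := hab
          have h2 := Finset.mem_preimage.mp h1
          exact h2) i i h
    exact hacy (f i) this
  · intro E hE
    ext e
    rw [Finset.mem_preimage, Finset.mem_image]
    constructor
    · rintro ⟨e', he', heq⟩
      rwa [hp heq] at he'
    · intro he; exact ⟨e, he, rfl⟩
  · intro E hE
    obtain ⟨hsub, _⟩ := mem_dagF.1 hE
    rw [Finset.image_preimage]
    refine Finset.filter_true_of_mem ?_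
    intro e he
    obtain ⟨a, b⟩ := e
    obtain ⟨h1, h2⟩ := Finset.mem_product.1 (hsub he)
    obtain ⟨i, hi⟩ := hfsurj a h1
    obtain ⟨j, hj⟩ := hfsurj b h2
    exact ⟨(i, j), by simp [Prod.map, hi, hj]⟩
  · intro E hE
    rw [Finset.card_image_of_injective _ hp]

lemma P_zero : P 0 = 1 := by
  have h : dagF 0 Finset.univ = {∅} := by
    ext E
    rw [mem_dagF, Finset.mem_singleton]
    constructor
    · intro _
      exact Finset.eq_empty_of_forall_notMem (fun x _ => Fin.elim0 x.1)
    · intro hE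
      subst hE
      exact ⟨Finset.empty_subset _, acy_empty⟩
  rw [P, AOn, h]
  simp

/-- the set of sources (in-degree-0 vertices) of an edge set -/
def src (n : ℕ) (E : Finset (Fin n × Fin n)) : Finset (Fin n) :=
  Finset.univ.filter (fun i => ∀ j, (j, i) ∉ E)

lemma mem_src {n : ℕ} {E : Finset (Fin n × Fin n)} {i : Fin n} :
    i ∈ src n E ↔ ∀ j, (j, i) ∉ E := by simp [src]

lemma src_nonempty {n : ℕ} (hn : 1 ≤ n) {E : Finset (Fin n × Fin n)} (hE : Acy E) :
    (src n E).Nonempty := by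
  have ht : IsTrans (Fin n) (TransGen (er E)) := ⟨fun a b c hab hbc => hab.trans hbc⟩
  have hi : IsIrrefl (Fin n) (TransGen (er E)) := ⟨hE⟩
  have wf := Finite.wellFounded_of_trans_of_irrefl (TransGen (er E))
  obtain ⟨m, _, hmin⟩ := wf.has_min Set.univ ⟨⟨0, hn⟩, trivial⟩
  exact ⟨m, mem_src.2 fun j hj => hmin j trivial (TransGen.single hj)⟩

lemma acy_union {n : ℕ} {S : Finset (Fin n)} {F H : Finset (Fin n × Fin n)}
    (hF : F ⊆ S ×ˢ Sᶜ) (hH : H ⊆ Sᶜ ×ˢ Sᶜ) (hHacy : Acy H) : Acy (F ∪ H) := by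
  classical
  have main : ∀ a b : Fin n, TransGen (er (F ∪ H)) a b →
      (a ∉ S → TransGen (er H) a b) ∧ b ∉ S := by
    intro a b h
    induction h with
    | single hedge =>
      have hedge' := Finset.mem_union.1 hedge
      constructor
      · intro ha
        refine TransGen.single ?_
        rcases hedge' with h | h
        · exact absurd (Finset.mem_product.1 (hF h)).1 ha
        · exact h
      · rcases hedge' with h | h
        · exact Finset.mem_compl.1 (Finset.mem_product.1 (hF h)).2
        · exact Finset.mem_compl.1 (Finset.mem_product.1 (hH h)).2
    | tail hab hedge ih =>
      obtain ⟨ih1, hc⟩ := ih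
      have hedge' := Finset.mem_union.1 hedge
      have hH' := Or.resolve_left hedge' (fun h => hc (Finset.mem_product.1 (hF h)).1)
      refine ⟨fun ha => (ih1 ha).tail hH', ?_⟩
      rcases hedge' with h | h
      · exact Finset.mem_compl.1 (Finset.mem_product.1 (hF h)).2
      · exact Finset.mem_compl.1 (Finset.mem_product.1 (hH h)).2
  intro i hcyc
  obtain ⟨h1, h2⟩ := main i i hcyc
  exact hHacy i (h1 h2)

lemma split (n : ℕ) (S : Finset (Fin n)) :
    ∑ E ∈ (dagF n Finset.univ).filter (fun E => S ⊆ src n E), w ^ E.card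
      = (1 + w) ^ (S.card * (n - S.card)) * AOn n Sᶜ := by
  classical
  have hb : ((1 + w) ^ (S.card * (n - S.card)) : K)
      = ∑ F ∈ (S ×ˢ Sᶜ).powerset, w ^ F.card := by
    rw [Finset.sum_powerset_apply_card (fun m => (w : K) ^ m)]
    have hcard : (S ×ˢ Sᶜ).card = S.card * (n - S.card) := by
      rw [Finset.card_product, Finset.card_compl, Fintype.card_fin]
    rw [hcard, add_comm (1 : K) w, add_pow]
    simp [nsmul_eq_mul, mul_comm]
  rw [hb, AOn, Finset.sum_mul_sum, ← Finset.sum_product']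
  have hTgt : ∀ E ∈ (dagF n Finset.univ).filter (fun E => S ⊆ src n E),
      ∀ e ∈ E, e.2 ∉ S := by
    intro E hE e he h2
    have hsrc := (Finset.mem_filter.1 hE).2
    exact mem_src.1 (hsrc h2) e.1 (by rwa [Prod.mk.eta])
  refine Finset.sum_bij'
    (fun E _ => (E.filter (fun e => e.1 ∈ S), E.filter (fun e => e.1 ∉ S)))
    (fun p _ => p.1 ∪ p.2) ?_ ?_ ?_ ?_ ?_
  · intro E hE
    have hacy := (mem_dagF.1 (Finset.mem_filter.1 hE).1).2
    refine Finset.mem_product.2 ⟨Finset.mem_powerset.2 ?_, mem_dagF.2 ⟨?_, ?_⟩⟩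
    · intro e he
      have h1 := (Finset.mem_filter.1 he).2
      exact Finset.mem_product.2 ⟨h1, Finset.mem_compl.2 (hTgt E hE e (Finset.mem_filter.1 he).1)⟩
    · intro e he
      have h1 := (Finset.mem_filter.1 he).2
      exact Finset.mem_product.2 ⟨Finset.mem_compl.2 h1,
        Finset.mem_compl.2 (hTgt E hE e (Finset.mem_filter.1 he).1)⟩
    · exact acy_subset (Finset.filter_subset _ _) hacy
  · intro p hp
    obtain ⟨hp1, hp2⟩ := Finset.mem_product.1 hp
    have hF := Finset.mem_powerset.1 hp1
    obtain ⟨hHsub, hHacy⟩ := mem_dagF.1 hp2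
    refine Finset.mem_filter.2 ⟨mem_dagF.2 ⟨?_, acy_union hF hHsub hHacy⟩, ?_⟩
    · rw [Finset.univ_product_univ]; exact Finset.subset_univ _
    · intro s hs
      refine mem_src.2 fun j hj => ?_
      rcases Finset.mem_union.1 hj with h | h
      · exact Finset.mem_compl.1 (Finset.mem_product.1 (hF h)).2 hs
      · exact Finset.mem_compl.1 (Finset.mem_product.1 (hHsub h)).2 hs
  · intro E hE
    exact Finset.filter_union_filter_not_eq _ E
  · intro p hp
    obtain ⟨hp1, hp2⟩ := Finset.mem_product.1 hp
    have hF := Finset.mem_powerset.1 hp1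
    have hHsub := (mem_dagF.1 hp2).1
    have e1 : Finset.filter (fun e => e.1 ∈ S) (p.1 ∪ p.2) = p.1 := by
      rw [Finset.filter_union]
      rw [Finset.filter_true_of_mem (fun e he => (Finset.mem_product.1 (hF he)).1),
        Finset.filter_false_of_mem
          (fun e he => Finset.mem_compl.1 (Finset.mem_product.1 (hHsub he)).1),
        Finset.union_empty]
    have e2 : Finset.filter (fun e => e.1 ∉ S) (p.1 ∪ p.2) = p.2 := by
      rw [Finset.filter_union]
      rw [Finset.filter_false_of_mem
          (fun e he => not_not_intro (Finset.mem_product.1 (hF he)).1),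
        Finset.filter_true_of_mem
          (fun e he => Finset.mem_compl.1 (Finset.mem_product.1 (hHsub he)).1),
        Finset.empty_union]
    exact Prod.ext e1 e2
  · intro E hE
    dsimp only
    rw [← pow_add, Finset.card_filter_add_card_filter_not]

lemma key (n : ℕ) (hn : 1 ≤ n) :
    ∑ S ∈ (Finset.univ : Finset (Fin n)).powerset,
      (-1 : K) ^ S.card * ((1 + w) ^ (S.card * (n - S.card)) * P (n - S.card)) = 0 := by
  classical
  have h1 : ∀ S ∈ (Finset.univ : Finset (Fin n)).powerset,
      (-1 : K) ^ S.card * ((1 + w) ^ (S.card * (n - S.card)) * P (n - S.card))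
        = ∑ E ∈ (dagF n Finset.univ).filter (fun E => S ⊆ src n E),
            (-1 : K) ^ S.card * w ^ E.card := by
    intro S _
    rw [← Finset.mul_sum, split n S, AOn_card, Finset.card_compl, Fintype.card_fin]
  rw [Finset.sum_congr rfl h1]
  have h2 : ∀ S ∈ (Finset.univ : Finset (Fin n)).powerset,
      ∑ E ∈ (dagF n Finset.univ).filter (fun E => S ⊆ src n E),
          (-1 : K) ^ S.card * w ^ E.card
        = ∑ E ∈ dagF n Finset.univ,
            if S ⊆ src n E then (-1 : K) ^ S.card * w ^ E.card else 0 := by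
    intro S _
    rw [Finset.sum_filter]
  rw [Finset.sum_congr rfl h2, Finset.sum_comm]
  refine Finset.sum_eq_zero fun E hE => ?_
  have hacy := (mem_dagF.1 hE).2
  have hne : src n E ≠ ∅ := by
    obtain ⟨x, hx⟩ := src_nonempty hn hacy
    exact Finset.ne_empty_of_mem hx
  have h3 : ∑ S ∈ (Finset.univ : Finset (Fin n)).powerset,
      (if S ⊆ src n E then (-1 : K) ^ S.card * w ^ E.card else 0)
        = ∑ S ∈ (src n E).powerset, (-1 : K) ^ S.card * w ^ E.card := by
    rw [← Finset.sum_filter]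
    congr 1
    ext t
    simp [Finset.mem_powerset]
  have hz : (∑ S ∈ (src n E).powerset, (-1 : K) ^ S.card)
      = ((∑ S ∈ (src n E).powerset, (-1 : ℤ) ^ S.card : ℤ) : K) := by
    push_cast
    rfl
  rw [h3, ← Finset.sum_mul, hz,
    Finset.sum_powerset_neg_one_pow_card_of_nonempty (Finset.nonempty_iff_ne_empty.2 hne),
    Int.cast_zero, zero_mul]

lemma choose2_add (a b : ℕ) : (a + b).choose 2 = a.choose 2 + b.choose 2 + a * b := by
  induction b with
  | zero => simp
  | succ b ih =>
    have h1 : (a + b + 1).choose 2 = (a+b).choose 2 + (a+b) := by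
      simp [Nat.choose_succ_succ, Nat.choose_one_right]; omega
    have h2 : (b + 1).choose 2 = b.choose 2 + b := by
      simp [Nat.choose_succ_succ, Nat.choose_one_right]; omega
    have h3 : a * (b + 1) = a * b + a := by ring
    have h0 : a + (b + 1) = a + b + 1 := by omega
    rw [h0, h1, h2, h3]
    omega

lemma dagCount_eq (n m : ℕ) :
    dagCount n m = ((dagF n Finset.univ).filter (fun E => E.card = m)).card := by
  classical
  rw [dagCount, Nat.card_eq_fintype_card, Fintype.card_subtype]
  congr 1
  ext E
  simp only [Finset.mem_filter, Finset.mem_univ, true_and]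
  constructor
  · rintro ⟨hl, hc, ha⟩
    exact ⟨mem_dagF.2 ⟨by rw [Finset.univ_product_univ]; exact Finset.subset_univ _, ha⟩, hc⟩
  · rintro ⟨hd, hc⟩
    have ha := (mem_dagF.1 hd).2
    exact ⟨fun e he => acy_loopless ha he, hc, ha⟩

lemma P_eq_sum (n : ℕ) :
    P n = ∑ m ∈ Finset.range (n * (n - 1) + 1), (dagCount n m : K) * w ^ m := by
  classical
  have hmap : ∀ E ∈ dagF n Finset.univ, E.card ∈ Finset.range (n * (n - 1) + 1) := by
    intro E hE
    obtain ⟨_, ha⟩ := mem_dagF.1 hE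
    have hsub : E ⊆ Finset.univ.offDiag := fun e he =>
      Finset.mem_offDiag.2 ⟨Finset.mem_univ _, Finset.mem_univ _, acy_loopless ha he⟩
    have hle := Finset.card_le_card hsub
    rw [Finset.offDiag_card, Finset.card_univ, Fintype.card_fin] at hle
    rw [Finset.mem_range]
    have h2 : n * (n - 1) = n * n - n := by
      cases n with
      | zero => simp
      | succ k =>
        have : (k + 1) * (k + 1) = (k + 1) * k + (k + 1) := by ring
        simp only [Nat.succ_sub_one]
        omega
    omega
  rw [P, AOn, ← Finset.sum_fiberwise_of_maps_to hmap]
  refine Finset.sum_congr rfl fun m hm => ?_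
  rw [dagCount_eq,
    Finset.sum_congr rfl (fun E hE => by rw [(Finset.mem_filter.1 hE).2]),
    Finset.sum_const, nsmul_eq_mul]

lemma one_add_X_ne_zero : (1 + w : K) ≠ 0 := by
  have h : (1 + RatFunc.X : RatFunc ℚ) = algebraMap (Polynomial ℚ) _ (1 + Polynomial.X) := by
    rw [map_add, map_one, RatFunc.algebraMap_X]
  rw [h]
  apply RatFunc.algebraMap_ne_zero
  intro hc
  have := congrArg (Polynomial.eval 0) hc
  simp at this

noncomputable instance : CharZero K :=
  charZero_of_injective_algebraMap ((algebraMap ℚ (RatFunc ℚ)).injective)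

lemma coeff_eq (n : ℕ) :
    (n.factorial : K) * PowerSeries.coeff n dagGGF * (1 + w) ^ (n.choose 2) = P n := by
  induction n using Nat.strong_induction_on with
  | _ n ih =>
  classical
  set f : PowerSeries K := PowerSeries.mk (fun k =>
    (-1) ^ k * ((1 + RatFunc.X) ^ (k.choose 2))⁻¹ / (k.factorial : RatFunc ℚ)) with hfdef
  have hgg : dagGGF = f⁻¹ := rfl
  have hc0 : PowerSeries.constantCoeff f = 1 := by
    rw [hfdef, PowerSeries.constantCoeff_mk]
    simp
  rcases Nat.eq_zero_or_pos n with hn | hn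
  · subst hn
    have h0 : PowerSeries.coeff 0 dagGGF = 1 := by
      rw [hgg, PowerSeries.coeff_zero_eq_constantCoeff, PowerSeries.constantCoeff_inv, hc0,
        inv_one]
    rw [h0, P_zero]
    simp
  · have hmul : f * f⁻¹ = 1 := PowerSeries.mul_inv_cancel f (by rw [hc0]; exact one_ne_zero)
    have hcoef : (PowerSeries.coeff n) (f * f⁻¹) = 0 := by
      rw [hmul, PowerSeries.coeff_one, if_neg (Nat.pos_iff_ne_zero.1 hn)]
    rw [PowerSeries.coeff_mul, Finset.Nat.sum_antidiagonal_eq_sum_range_succ_mk] at hcoef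
    set g : ℕ → K := fun j => PowerSeries.coeff j dagGGF with hgdef
    set R : ℕ → K := fun k => (n.choose k : K) *
      ((-1 : K) ^ k * ((1 + w) ^ (k * (n - k)) *
        (((n - k).factorial : K) * g (n - k) * (1 + w) ^ ((n - k).choose 2)))) with hRdef
    set T : ℕ → K := fun k => (n.choose k : K) *
      ((-1 : K) ^ k * ((1 + w) ^ (k * (n - k)) * P (n - k))) with hTdef
    -- (a) ∑ R = 0
    have hR : ∑ k ∈ Finset.range (n + 1), R k = 0 := by
      have := congrArg (fun x => ((n.factorial : K) * (1 + w) ^ (n.choose 2)) * x) hcoef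
      simp only [mul_zero, Finset.mul_sum] at this
      rw [← this]
      refine Finset.sum_congr rfl fun k hk => ?_
      have hkn : k ≤ n := Nat.lt_succ_iff.1 (Finset.mem_range.1 hk)
      have hfact : (n.factorial : K) = (n.choose k : K) * (k.factorial : K) *
          ((n - k).factorial : K) := by
        rw [← Nat.cast_mul, ← Nat.cast_mul, Nat.choose_mul_factorial_mul_factorial hkn]
      have hch : n.choose 2 = k.choose 2 + (n - k).choose 2 + k * (n - k) := by
        have := choose2_add k (n - k)
        rw [Nat.add_sub_cancel' hkn] at this
        omega
      have hpow : ((1 + w) ^ n.choose 2 : K)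
          = (1 + w) ^ k.choose 2 * (1 + w) ^ (n - k).choose 2 * (1 + w) ^ (k * (n - k)) := by
        rw [← pow_add, ← pow_add, ← hch]
      have hfk : PowerSeries.coeff k f
          = (-1) ^ k * ((1 + w) ^ k.choose 2)⁻¹ / (k.factorial : K) := by
        rw [hfdef, PowerSeries.coeff_mk]
      have hgk : PowerSeries.coeff (n - k) f⁻¹ = g (n - k) := by
        rw [hgdef, hgg]
      rw [hRdef, hfk, hgk, hfact, hpow]
      have h1 : ((1 + w) ^ k.choose 2 : K) ≠ 0 := pow_ne_zero _ one_add_X_ne_zero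
      have h2 : (k.factorial : K) ≠ 0 := Nat.cast_ne_zero.2 (Nat.factorial_ne_zero k)
      field_simp
    -- (b) ∑ T = 0
    have hT : ∑ k ∈ Finset.range (n + 1), T k = 0 := by
      have hkey := key n hn
      rw [Finset.sum_powerset_apply_card
        (fun j => (-1 : K) ^ j * ((1 + w) ^ (j * (n - j)) * P (n - j)))] at hkey
      rw [Finset.card_univ, Fintype.card_fin] at hkey
      rw [← hkey]
      refine Finset.sum_congr rfl fun k _ => ?_
      rw [hTdef, nsmul_eq_mul]
    -- (c) R (k+1) = T (k+1)
    have hRT : ∀ k, R (k + 1) = T (k + 1) := by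
      intro k
      simp only [hRdef, hTdef, hgdef]
      by_cases hkn : k + 1 ≤ n
      · rw [ih (n - (k + 1)) (by omega)]
      · rw [Nat.choose_eq_zero_of_lt (show n < k + 1 by omega)]
        simp
    rw [Finset.sum_range_succ' R n] at hR
    rw [Finset.sum_range_succ' T n] at hT
    rw [Finset.sum_congr rfl (fun i _ => hRT i)] at hR
    have hR0 : R 0 = (n.factorial : K) * PowerSeries.coeff n dagGGF * (1 + w) ^ n.choose 2 := by
      rw [hRdef]
      simp only [Nat.choose_zero_right, Nat.cast_one, pow_zero, Nat.sub_zero, zero_mul, one_mul]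
      rfl
    have hT0 : T 0 = P n := by
      rw [hTdef]
      simp
    rw [hR0] at hR
    rw [hT0] at hT
    linear_combination hR - hT

end DagAux

/-- the coefficient of `zⁿ/n!` in `DAG^(z,w)`, multiplied by
`(1+w)^{C(n,2)}`, is the counting polynomial `Σₘ DAG_{n,m} wᵐ`, a polynomial in `w`
with nonnegative integer coefficients. -/
theorem dagGGF_coeff (n : ℕ) :
    (n.factorial : RatFunc ℚ) * coeff n dagGGF *
        (1 + RatFunc.X) ^ (n.choose 2) =
      ∑ m ∈ Finset.range (n * (n - 1) + 1), (dagCount n m : RatFunc ℚ) * RatFunc.X ^ m := by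
  have h := DagAux.coeff_eq n
  rw [DagAux.P_eq_sum n] at h
  exact h
end

section
/- For the EGF T(z) of rooted labeled trees satisfying T(z) = z·e^{T(z)}, the Puiseux expansion at z = 1/e has leading terms T(z) = 1 − √2·√(1−ez) + (2/3)(1−ez) + O((1−ez)^{3/2}). -/
open Real Filter Asymptotics

open Finset

/-- The tree function `T(z) = Σ_{n≥1} n^{n-1} zⁿ/n!` as a real function. -/
noncomputable def treeFn (z : ℝ) : ℝ :=
  ∑' n : ℕ, (if n = 0 then 0 else (n : ℝ) ^ (n - 1) / (n.factorial : ℝ)) * z ^ n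

lemma sum_pascal (n : ℕ) (g : ℕ → ℝ) :
    ∑ k ∈ range (n+2), (-1:ℝ)^k * ((n+1).choose k) * g k
      = ∑ k ∈ range (n+1), (-1:ℝ)^k * (n.choose k) * (g k - g (k+1)) := by
  rw [Finset.sum_range_succ' _ (n+1)]
  have e0 : ∑ k ∈ range (n+1), (-1:ℝ)^k * (n.choose k) * (g k - g (k+1))
      = (∑ k ∈ range (n+1), (-1:ℝ)^k * (n.choose k) * g k)
        - ∑ k ∈ range (n+1), (-1:ℝ)^k * (n.choose k) * g (k+1) := by
    rw [← Finset.sum_sub_distrib]; exact Finset.sum_congr rfl (fun k _ => by ring)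
  have e1 : ∑ k ∈ range (n+1), (-1:ℝ)^k * (n.choose k) * g k
      = (∑ k ∈ range n, (-1:ℝ)^(k+1) * (n.choose (k+1)) * g (k+1))
        + (-1:ℝ)^0 * (n.choose 0) * g 0 := by
    exact Finset.sum_range_succ' (fun k => (-1:ℝ)^k * (n.choose k) * g k) n
  have e1' : ∑ k ∈ range n, (-1:ℝ)^(k+1) * (n.choose (k+1)) * g (k+1)
      = ∑ k ∈ range (n+1), (-1:ℝ)^(k+1) * (n.choose (k+1)) * g (k+1) := by
    rw [Finset.sum_range_succ]
    simp [Nat.choose_succ_self]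
  rw [e0, e1, e1']
  have e2 : ∀ k ∈ range (n+1), (-1:ℝ)^(k+1) * (((n+1).choose (k+1) : ℕ) : ℝ) * g (k+1)
      = ((-1:ℝ)^(k+1) * (n.choose (k+1)) * g (k+1)) - ((-1:ℝ)^k * (n.choose k)) * g (k+1) := by
    intro k _
    rw [Nat.choose_succ_succ]
    push_cast
    ring
  rw [Finset.sum_congr rfl e2, Finset.sum_sub_distrib]
  simp
  ring

/-- n-th finite difference of a polynomial of degree < n vanishes. -/
lemma finDiff : ∀ n : ℕ, ∀ m : ℕ, m < n → ∀ x : ℝ,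
    ∑ k ∈ range (n+1), (-1:ℝ)^k * (n.choose k) * (x + k)^m = 0 := by
  intro n
  induction n with
  | zero => intro m hm; omega
  | succ n ih =>
    intro m hm x
    have : (n + 1 + 1) = n + 2 := rfl
    rw [this, sum_pascal n (fun k => (x + (k:ℕ))^m)]
    have expand : ∀ k ∈ range (n+1),
        (-1:ℝ)^k * (n.choose k) * ((x+(k:ℕ))^m - (x+((k+1:ℕ):ℝ))^m)
        = ∑ j ∈ range m, -((m.choose j : ℝ) * ((-1:ℝ)^k * (n.choose k) * (x+(k:ℕ))^j)) := by
      intro k _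
      have hb : ((x + (k:ℕ)) + 1)^m = ∑ j ∈ range (m+1), (m.choose j : ℝ) * (x+(k:ℕ))^j := by
        rw [add_pow]
        exact Finset.sum_congr rfl (fun j _ => by ring)
      have hc : (x + ((k+1:ℕ):ℝ)) = (x + (k:ℕ)) + 1 := by push_cast; ring
      rw [hc, hb, Finset.sum_range_succ, Nat.choose_self]
      have e3 : ∀ j ∈ range m, -((m.choose j : ℝ) * ((-1:ℝ)^k * (n.choose k) * (x+(k:ℕ))^j))
          = (-((-1:ℝ)^k * (n.choose k))) * ((m.choose j : ℝ) * (x+(k:ℕ))^j) := by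
        intro j _; ring
      rw [Finset.sum_congr rfl e3, ← Finset.mul_sum]
      push_cast
      ring
    rw [Finset.sum_congr rfl expand]
    rw [Finset.sum_comm]
    have : ∀ j ∈ range m, ∑ k ∈ range (n+1),
        -((m.choose j : ℝ) * ((-1:ℝ)^k * (n.choose k) * (x+(k:ℕ))^j)) = 0 := by
      intro j hj
      have hjn : j < n := by
        have := Finset.mem_range.mp hj; omega
      have hih := ih j hjn x
      have e4 : ∀ k ∈ range (n+1), -((m.choose j : ℝ) * ((-1:ℝ)^k * (n.choose k) * (x+(k:ℕ))^j))
          = (-(m.choose j : ℝ)) * ((-1:ℝ)^k * (n.choose k) * (x+(k:ℕ))^j) := by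
        intro k _; ring
      rw [Finset.sum_congr rfl e4, ← Finset.mul_sum, hih, mul_zero]
    rw [Finset.sum_congr rfl this]
    simp

lemma choose_id (n k : ℕ) (hk : k ≤ n) :
    (n+1-k) * ((n+1).choose k) = (n+1) * (n.choose k) := by
  have h1 := Nat.add_one_mul_choose_eq n (n-k)
  have h2 : n.choose (n-k) = n.choose k := Nat.choose_symm hk
  have h4 : n - k + 1 = n + 1 - k := by omega
  have h3 : (n+1).choose (n+1-k) = (n+1).choose k := Nat.choose_symm (by omega)
  rw [h2, h4, h3] at h1
  rw [mul_comm]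
  exact h1.symm

lemma abelP : ∀ n : ℕ, ∀ y : ℝ,
    ∑ k ∈ range (n+1), ((n.choose k : ℝ)) * ((k:ℝ)+1)^(k-1) * (y + ((n-k : ℕ):ℝ))^(n-k)
      = (y + n + 1)^n := by
  intro n
  induction n with
  | zero => intro y; simp
  | succ n ih =>
    intro y
    set P : ℝ → ℝ := fun y =>
      ∑ k ∈ range (n+2), (((n+1).choose k : ℝ)) * ((k:ℝ)+1)^(k-1) * (y + ((n+1-k : ℕ):ℝ))^(n+1-k)
      with hP
    set D : ℝ → ℝ := fun y => P y - (y + ((n:ℝ)+2))^(n+1) with hD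
    have hderiv : ∀ y : ℝ, HasDerivAt D 0 y := by
      intro y
      have hterm : ∀ k ∈ range (n+2), HasDerivAt
          (fun y => (((n+1).choose k : ℝ)) * ((k:ℝ)+1)^(k-1) * (y + ((n+1-k : ℕ):ℝ))^(n+1-k))
          ((((n+1).choose k : ℝ)) * ((k:ℝ)+1)^(k-1) *
            (((n+1-k : ℕ):ℝ) * (y + ((n+1-k : ℕ):ℝ))^(n+1-k-1))) y := by
        intro k _
        have h1 : HasDerivAt (fun y : ℝ => (y + ((n+1-k : ℕ):ℝ))^(n+1-k))
            (((n+1-k : ℕ):ℝ) * (y + ((n+1-k : ℕ):ℝ))^(n+1-k-1)) y := by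
          simpa using ((hasDerivAt_id y).add_const ((n+1-k : ℕ):ℝ)).fun_pow (n+1-k)
        simpa [mul_assoc] using h1.const_mul ((((n+1).choose k : ℝ)) * ((k:ℝ)+1)^(k-1))
      have hPderiv : HasDerivAt P
          (∑ k ∈ range (n+2), (((n+1).choose k : ℝ)) * ((k:ℝ)+1)^(k-1) *
            (((n+1-k : ℕ):ℝ) * (y + ((n+1-k : ℕ):ℝ))^(n+1-k-1))) y :=
        HasDerivAt.fun_sum hterm
      have hsum : (∑ k ∈ range (n+2), (((n+1).choose k : ℝ)) * ((k:ℝ)+1)^(k-1) *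
            (((n+1-k : ℕ):ℝ) * (y + ((n+1-k : ℕ):ℝ))^(n+1-k-1)))
          = ((n:ℝ)+1) * (y + (n:ℝ) + 2)^n := by
        rw [Finset.sum_range_succ]
        simp only [Nat.sub_self, Nat.cast_zero, zero_mul, mul_zero, add_zero]
        have hcong : ∀ k ∈ range (n+1), (((n+1).choose k : ℝ)) * ((k:ℝ)+1)^(k-1) *
            (((n+1-k : ℕ):ℝ) * (y + ((n+1-k : ℕ):ℝ))^(n+1-k-1))
            = ((n:ℝ)+1) * ((n.choose k : ℝ) * ((k:ℝ)+1)^(k-1) * ((y+1) + ((n-k : ℕ):ℝ))^(n-k)) := by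
          intro k hk
          have hkn : k ≤ n := by have := Finset.mem_range.mp hk; omega
          have hch : ((n+1-k : ℕ):ℝ) * (((n+1).choose k : ℕ):ℝ) = ((n:ℝ)+1) * (n.choose k : ℝ) := by
            have hcast := congrArg (fun m : ℕ => (m:ℝ)) (choose_id n k hkn)
            push_cast [Nat.cast_sub (show k ≤ n+1 by omega)] at hcast ⊢
            linarith [hcast]
          have he : n+1-k-1 = n-k := by omega
          have hc2 : (y + ((n+1-k : ℕ):ℝ)) = ((y+1) + ((n-k : ℕ):ℝ)) := by
            have h5 : (n+1-k : ℕ) = (n-k) + 1 := by omega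
            rw [h5]; push_cast; ring
          rw [he, hc2]
          linear_combination (((k:ℝ)+1)^(k-1) * ((y+1) + ((n-k : ℕ):ℝ))^(n-k)) * hch
        rw [Finset.sum_congr rfl hcong, ← Finset.mul_sum, ih (y+1)]
        have h6 : (y + 1 + (n:ℝ) + 1) = (y + (n:ℝ) + 2) := by ring
        rw [h6]
      have hQ : HasDerivAt (fun y : ℝ => (y + ((n:ℝ)+2))^(n+1))
          (((n:ℝ)+1) * (y + (n:ℝ) + 2)^n) y := by
        have h1 := ((hasDerivAt_id y).add_const ((n:ℝ)+2)).pow (n+1)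
        simp only [Nat.add_sub_cancel, mul_one, id_eq] at h1
        have h7 : (((n+1 : ℕ)):ℝ) = (n:ℝ)+1 := by push_cast; ring
        rw [h7] at h1
        have h8 : ∀ z : ℝ, (z + ((n:ℝ)+2)) = (z + (n:ℝ) + 2) := fun z => by ring
        simp only [h8] at h1 ⊢
        exact h1
      have hfin : HasDerivAt D ((((n:ℝ)+1) * (y + (n:ℝ) + 2)^n)
          - (((n:ℝ)+1) * (y + (n:ℝ) + 2)^n)) y := by
        apply HasDerivAt.sub
        · rw [hsum] at hPderiv; exact hPderiv
        · exact hQ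
      simpa using hfin
    have hconst : ∀ a b : ℝ, D a = D b :=
      fun a b => is_const_of_deriv_eq_zero (fun y => (hderiv y).differentiableAt)
        (fun y => (hderiv y).deriv) a b
    have hval : D (-((n:ℝ)+2)) = 0 := by
      have hzero : P (-((n:ℝ)+2)) = 0 := by
        simp only [hP]
        have hcong : ∀ k ∈ range (n+2), (((n+1).choose k : ℝ)) * ((k:ℝ)+1)^(k-1) *
            ((-((n:ℝ)+2)) + ((n+1-k : ℕ):ℝ))^(n+1-k)
            = ((-1:ℝ)^(n+1)) * ((-1:ℝ)^k * (((n+1).choose k : ℝ)) * ((1:ℝ) + (k:ℝ))^n) := by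
          intro k hk
          have hkn : k ≤ n+1 := by have := Finset.mem_range.mp hk; omega
          have hbase : ((-((n:ℝ)+2)) + ((n+1-k : ℕ):ℝ)) = -((k:ℝ)+1) := by
            have h9 : ((n+1-k : ℕ):ℝ) = (n:ℝ)+1-(k:ℝ) := by
              push_cast [Nat.cast_sub hkn]; ring
            rw [h9]; ring
          rw [hbase, neg_pow]
          have hpow : ((k:ℝ)+1)^(k-1) * ((k:ℝ)+1)^(n+1-k) = ((k:ℝ)+1)^n := by
            rcases Nat.eq_zero_or_pos k with hk0 | hk0
            · subst hk0; simp
            · rw [← pow_add]; congr 1; omega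
          have hsign : (-1:ℝ)^(n+1-k) = (-1:ℝ)^(n+1) * (-1:ℝ)^k := by
            have h2 : (-1:ℝ)^(n+1-k) * (-1:ℝ)^k = (-1:ℝ)^(n+1) := by
              rw [← pow_add, Nat.sub_add_cancel hkn]
            have h3 : ((-1:ℝ)^k) * ((-1:ℝ)^k) = 1 := by
              rw [← pow_add]; exact Even.neg_one_pow ⟨k, rfl⟩
            calc (-1:ℝ)^(n+1-k) = ((-1:ℝ)^(n+1-k) * (-1:ℝ)^k) * (-1:ℝ)^k := by
                  rw [mul_assoc, h3, mul_one]
              _ = (-1:ℝ)^(n+1) * (-1:ℝ)^k := by rw [h2]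
          rw [hsign]
          linear_combination ((-1:ℝ)^(n+1) * (-1:ℝ)^k * (((n+1).choose k : ℝ))) * hpow
        rw [Finset.sum_congr rfl hcong, ← Finset.mul_sum]
        have hfd := finDiff (n+1) n (by omega) 1
        rw [hfd, mul_zero]
      rw [hD]
      simp only [hzero]
      have h10 : (-((n:ℝ)+2) + ((n:ℝ)+2)) = 0 := by ring
      rw [h10]
      simp
    have h0 : D y = 0 := by rw [hconst y (-((n:ℝ)+2)), hval]
    have hPy : P y = (y + ((n:ℝ)+2))^(n+1) := by
      have h1 : P y - (y + ((n:ℝ)+2))^(n+1) = 0 := h0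
      linarith
    rw [hP] at hPy
    simp only [] at hPy
    convert hPy using 2
    push_cast
    ring

lemma abelSum (n : ℕ) :
    ∑ k ∈ range (n+1), (n.choose k : ℝ) * ((k:ℝ)+1)^k * (((n-k : ℕ):ℝ)+1)^(n-k-1)
      = ((n:ℝ)+2)^n := by
  have h := abelP n 1
  have h2 := Finset.sum_range_reflect
    (fun k => ((n.choose k : ℝ)) * ((k:ℝ)+1)^(k-1) * ((1:ℝ) + ((n-k : ℕ):ℝ))^(n-k)) (n+1)
  simp only [Nat.add_sub_cancel] at h2
  have hcong : ∀ k ∈ range (n+1),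
      (n.choose k : ℝ) * ((k:ℝ)+1)^k * (((n-k : ℕ):ℝ)+1)^(n-k-1)
      = (fun j => ((n.choose j : ℝ)) * ((j:ℝ)+1)^(j-1) * ((1:ℝ) + ((n-j : ℕ):ℝ))^(n-j)) (n-k) := by
    intro k hk
    have hkn : k ≤ n := by have := Finset.mem_range.mp hk; omega
    simp only []
    have e1 : n - (n-k) = k := by omega
    rw [e1]
    have e2 : (n.choose (n-k) : ℝ) = (n.choose k : ℝ) := by
      rw [Nat.choose_symm hkn]
    rw [e2]
    have e3 : ((1:ℝ) + ((k:ℕ):ℝ))^k = (((k:ℕ):ℝ)+1)^k := by ring_nf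
    rw [e3]
    have e4 : ((((n-k:ℕ)):ℝ)+1)^((n-k)-1) = (((n-k:ℕ):ℝ)+1)^((n-k)-1) := rfl
    ring
  rw [Finset.sum_congr rfl hcong, h2, h]
  ring_nf

noncomputable def Td (z : ℝ) : ℝ := ∑' n : ℕ, (((n:ℝ)+1)^n / n.factorial) * z^n
noncomputable def Ef (z : ℝ) : ℝ := ∑' n : ℕ, (((n:ℝ)+1)^n / (n+1).factorial) * z^n
noncomputable def Ed (z : ℝ) : ℝ := ∑' n : ℕ, (((n:ℝ)+2)^n / n.factorial) * z^n

lemma pow_self_le (n : ℕ) : ((n:ℝ))^n ≤ n.factorial * Real.exp n := by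
  have h1 := Real.sum_le_exp_of_nonneg (x := (n:ℝ)) (by positivity) (n+1)
  have h2 : ((n:ℝ))^n / n.factorial ≤ ∑ i ∈ range (n+1), (n:ℝ)^i / i.factorial := by
    exact Finset.single_le_sum (f := fun i => (n:ℝ)^i / i.factorial)
      (fun i _ => by positivity) (Finset.self_mem_range_succ n)
  have h3 : ((n:ℝ))^n / n.factorial ≤ Real.exp n := le_trans h2 h1
  have hf : (0:ℝ) < n.factorial := by positivity
  calc ((n:ℝ))^n = ((n:ℝ))^n / n.factorial * n.factorial := by field_simp
    _ ≤ Real.exp n * n.factorial := by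
        apply mul_le_mul_of_nonneg_right h3 (le_of_lt hf)
    _ = n.factorial * Real.exp n := by ring

lemma exp_pow_nat (n : ℕ) : Real.exp 1 ^ n = Real.exp n := by
  rw [← Real.exp_nat_mul, mul_one]

lemma fact_le_nat (n : ℕ) : ∀ c : ℕ, (n+c).factorial ≤ n.factorial * (n+c)^c := by
  intro c
  induction c with
  | zero => simp
  | succ c ih =>
    have h1 : (n+(c+1)).factorial = (n+c+1) * (n+c).factorial := by
      have : n+(c+1) = (n+c)+1 := by omega
      rw [this, Nat.factorial_succ]
    rw [h1]
    calc (n+c+1) * (n+c).factorial ≤ (n+c+1) * (n.factorial * (n+c)^c) :=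
          Nat.mul_le_mul_left _ ih
      _ ≤ (n+c+1) * (n.factorial * (n+c+1)^c) := by
          apply Nat.mul_le_mul_left
          apply Nat.mul_le_mul_left
          exact Nat.pow_le_pow_left (by omega) c
      _ = n.factorial * (n+(c+1))^(c+1) := by ring_nf
  
/-- master coefficient bound -/
lemma coef_le (n c : ℕ) :
    ((n:ℝ)+c)^n ≤ n.factorial * Real.exp c * Real.exp 1 ^ n := by
  rcases Nat.eq_zero_or_pos (n+c) with h0 | hpos
  · have hn : n = 0 := by omega
    have hc : c = 0 := by omega
    subst hn; subst hc
    simp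
  · have key := pow_self_le (n+c)
    push_cast at key
    have hf : (((n+c).factorial : ℕ):ℝ) ≤ (n.factorial : ℝ) * ((n:ℝ)+c)^c := by
      have := fact_le_nat n c
      have hcast : (((n+c).factorial : ℕ):ℝ) ≤ ((n.factorial * (n+c)^c : ℕ):ℝ) :=
        Nat.cast_le.mpr this
      push_cast at hcast
      exact hcast
    have hexp : Real.exp ((n:ℝ)+c) = Real.exp 1 ^ n * Real.exp c := by
      rw [Real.exp_add, exp_pow_nat]
    have hBpos : (0:ℝ) < ((n:ℝ)+c)^c := by
      have : (0:ℝ) < (n:ℝ)+c := by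
        have : (0:ℕ) < n+c := hpos
        exact_mod_cast Nat.cast_pos.mpr hpos |>.trans_eq (by push_cast; ring)
      positivity
    have hchain : ((n:ℝ)+c)^n * ((n:ℝ)+c)^c ≤ (n.factorial * Real.exp c * Real.exp 1 ^ n) * ((n:ℝ)+c)^c := by
      have e1 : ((n:ℝ)+c)^n * ((n:ℝ)+c)^c = ((n:ℝ)+c)^(n+c) := by rw [← pow_add]
      rw [e1]
      calc ((n:ℝ)+c)^(n+c) ≤ ((n+c).factorial : ℝ) * Real.exp ((n:ℝ)+c) := key
        _ ≤ ((n.factorial : ℝ) * ((n:ℝ)+c)^c) * Real.exp ((n:ℝ)+c) := by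
            apply mul_le_mul_of_nonneg_right hf (Real.exp_nonneg _)
        _ = (n.factorial * Real.exp c * Real.exp 1 ^ n) * ((n:ℝ)+c)^c := by
            rw [hexp]; ring
    exact le_of_mul_le_mul_right hchain hBpos

noncomputable def tcoef (n : ℕ) : ℝ := if n = 0 then 0 else (n : ℝ) ^ (n - 1) / (n.factorial : ℝ)

lemma treeFn_eq (z : ℝ) : treeFn z = ∑' n : ℕ, tcoef n * z^n := rfl

lemma tcoef_abs (n : ℕ) : |tcoef n| ≤ 1 * Real.exp 1 ^ n := by
  rw [one_mul, tcoef]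
  rcases Nat.eq_zero_or_pos n with h0 | hpos
  · subst h0; simp [Real.exp_nonneg]
  · rw [if_neg (by omega)]
    have hnn : (0:ℝ) ≤ (n:ℝ)^(n-1)/n.factorial := by positivity
    rw [abs_of_nonneg hnn]
    rw [div_le_iff₀ (by positivity)]
    have h1 : (n:ℝ)^(n-1) * (n:ℝ) = (n:ℝ)^n := by
      rw [← pow_succ]
      congr 1
      omega
    have h2 : (n:ℝ)^(n-1) ≤ (n:ℝ)^(n-1) * (n:ℝ) := by
      have hc1 : (1:ℝ) ≤ (n:ℝ) := by exact_mod_cast hpos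
      nlinarith [pow_nonneg (Nat.cast_nonneg (α := ℝ) n) (n-1)]
    calc (n:ℝ)^(n-1) ≤ (n:ℝ)^n := by rw [← h1]; exact h2
      _ ≤ n.factorial * Real.exp n := pow_self_le n
      _ = Real.exp 1 ^ n * n.factorial := by rw [exp_pow_nat]; ring
  
lemma Tdcoef_abs (n : ℕ) : |((n:ℝ)+1)^n / n.factorial| ≤ Real.exp 1 * Real.exp 1 ^ n := by
  have h := coef_le n 1
  push_cast at h
  have hnn : (0:ℝ) ≤ ((n:ℝ)+1)^n / n.factorial := by positivity
  rw [abs_of_nonneg hnn, div_le_iff₀ (by positivity)]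
  calc ((n:ℝ)+1)^n ≤ n.factorial * Real.exp 1 * Real.exp 1 ^ n := h
    _ = Real.exp 1 * Real.exp 1 ^ n * n.factorial := by ring

lemma Efcoef_abs (n : ℕ) : |((n:ℝ)+1)^n / (n+1).factorial| ≤ Real.exp 1 * Real.exp 1 ^ n := by
  have h := Tdcoef_abs n
  have hnn : (0:ℝ) ≤ ((n:ℝ)+1)^n / (n+1).factorial := by positivity
  have hnn' : (0:ℝ) ≤ ((n:ℝ)+1)^n / n.factorial := by positivity
  rw [abs_of_nonneg hnn]
  rw [abs_of_nonneg hnn'] at h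
  refine le_trans ?_ h
  apply div_le_div_of_nonneg_left (by positivity) (by positivity)
  exact_mod_cast Nat.cast_le.mpr (Nat.factorial_le (by omega))

lemma Edcoef_abs (n : ℕ) : |((n:ℝ)+2)^n / n.factorial| ≤ Real.exp 2 * Real.exp 1 ^ n := by
  have h := coef_le n 2
  push_cast at h
  have hnn : (0:ℝ) ≤ ((n:ℝ)+2)^n / n.factorial := by positivity
  rw [abs_of_nonneg hnn, div_le_iff₀ (by positivity)]
  calc ((n:ℝ)+2)^n ≤ n.factorial * Real.exp 2 * Real.exp 1 ^ n := h
    _ = Real.exp 2 * Real.exp 1 ^ n * n.factorial := by ring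

lemma summable_geo_aux {q : ℝ} (h0 : 0 ≤ q) (h1 : q < 1) (C : ℝ) :
    Summable (fun n : ℕ => C * (((n:ℝ))+1) * q^n) := by
  have hq : ‖q‖ < 1 := by rwa [Real.norm_eq_abs, abs_of_nonneg h0]
  have h := summable_pow_mul_geometric_of_norm_lt_one (R := ℝ) 1 hq
  have h2 : Summable (fun n : ℕ => q^n) := summable_geometric_of_lt_one h0 h1
  have h3 := (h.add h2).mul_left C
  apply h3.congr
  intro n
  ring

lemma summable_of_coef {f : ℕ → ℝ} {C q : ℝ} (h0 : 0 ≤ q) (h1 : q < 1)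
    (hb : ∀ n, |f n| ≤ C * (((n:ℝ))+1) * q^n) : Summable f := by
  apply Summable.of_abs
  exact Summable.of_nonneg_of_le (fun n => abs_nonneg _) hb (summable_geo_aux h0 h1 C)

lemma q_facts {r : ℝ} (hr0 : 0 < r) (hq : Real.exp 1 * r < 1) :
    0 ≤ Real.exp 1 * r ∧ Real.exp 1 * r < 1 :=
  ⟨by positivity, hq⟩

/-- summability of the power series with coefficients bounded by K·eⁿ at |z| ≤ r -/
lemma summable_series {a : ℕ → ℝ} {K r z : ℝ} (hr0 : 0 < r)
    (hq : Real.exp 1 * r < 1) (ha : ∀ n, |a n| ≤ K * Real.exp 1 ^ n) (hz : |z| ≤ r) :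
    Summable (fun n => a n * z^n) := by
  apply summable_of_coef (C := K) (q := Real.exp 1 * r) (by positivity) hq
  intro n
  have h1 : |a n * z^n| = |a n| * |z|^n := by rw [abs_mul, abs_pow]
  have hK : 0 ≤ K := by
    have h00 := (abs_nonneg (a 0)).trans (ha 0)
    simpa using h00
  rw [h1]
  have s1 : |a n| * |z|^n ≤ (K * Real.exp 1 ^ n) * |z|^n :=
    mul_le_mul_of_nonneg_right (ha n) (by positivity)
  have s2 : (K * Real.exp 1 ^ n) * |z|^n ≤ (K * Real.exp 1 ^ n) * r^n :=
    mul_le_mul_of_nonneg_left (pow_le_pow_left₀ (abs_nonneg z) hz n)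
      (mul_nonneg hK (by positivity))
  have s3 : (K * Real.exp 1 ^ n) * r^n = K * (Real.exp 1 * r)^n := by rw [mul_pow]; ring
  have s4 : K * (Real.exp 1 * r)^n ≤ K * (((n:ℝ))+1) * (Real.exp 1 * r)^n := by
    have hq0 : (0:ℝ) ≤ (Real.exp 1 * r)^n := pow_nonneg (by positivity) n
    nlinarith [mul_nonneg (mul_nonneg hK hq0) (Nat.cast_nonneg (α := ℝ) n)]
  linarith [s1, s2, s3.le, s3.ge, s4]

lemma summable_deriv_series {a : ℕ → ℝ} {K r z : ℝ} (hr0 : 0 < r)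
    (hq : Real.exp 1 * r < 1) (ha : ∀ n, |a n| ≤ K * Real.exp 1 ^ n) (hz : |z| ≤ r) :
    Summable (fun n => a n * (((n:ℝ)) * z^(n-1))) := by
  have hK : 0 ≤ K := by
    have h00 := (abs_nonneg (a 0)).trans (ha 0)
    simpa using h00
  apply summable_of_coef (C := K/r) (q := Real.exp 1 * r) (by positivity) hq
  intro n
  rcases Nat.eq_zero_or_pos n with h0 | hpos
  · subst h0
    norm_num
    positivity
  · have h1 : |a n * (((n:ℝ)) * z^(n-1))| = |a n| * ((n:ℝ) * |z|^(n-1)) := by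
      rw [abs_mul, abs_mul, abs_pow, Nat.abs_cast]
    rw [h1]
    have h2 : |z|^(n-1) ≤ r^(n-1) := pow_le_pow_left₀ (abs_nonneg z) hz (n-1)
    have h3 : r^(n-1) = r^n / r := by
      rw [eq_div_iff (ne_of_gt hr0), ← pow_succ]
      congr 1
      omega
    have h4 : (n:ℝ) ≤ ((n:ℝ))+1 := by linarith
    have t1 : (n:ℝ) * |z|^(n-1) ≤ (n:ℝ) * (r^n/r) := by
      rw [← h3]
      exact mul_le_mul_of_nonneg_left h2 (Nat.cast_nonneg n)
    have t2 : |a n| * ((n:ℝ) * |z|^(n-1)) ≤ (K * Real.exp 1 ^ n) * ((n:ℝ) * (r^n/r)) :=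
      mul_le_mul (ha n) t1 (by positivity) (mul_nonneg hK (by positivity))
    have t3 : (K * Real.exp 1 ^ n) * ((n:ℝ) * (r^n/r)) = (K/r) * (n:ℝ) * (Real.exp 1 * r)^n := by
      rw [mul_pow]; field_simp
    have t4 : (K/r) * (n:ℝ) * (Real.exp 1 * r)^n ≤ (K/r) * (((n:ℝ))+1) * (Real.exp 1 * r)^n := by
      have hq0 : (0:ℝ) ≤ (Real.exp 1 * r)^n := pow_nonneg (by positivity) n
      nlinarith [mul_nonneg (div_nonneg hK (le_of_lt hr0)) hq0]
    linarith [t2, t3.le, t3.ge, t4]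

lemma hasDerivAt_series {a : ℕ → ℝ} {K r z : ℝ} (hr0 : 0 < r)
    (hq : Real.exp 1 * r < 1) (ha : ∀ n, |a n| ≤ K * Real.exp 1 ^ n) (hz : z ∈ Set.Ioo (-r) r) :
    HasDerivAt (fun w => ∑' n, a n * w^n) (∑' n, a n * (((n:ℝ)) * z^(n-1))) z := by
  have hK : 0 ≤ K := by
    have h00 := (abs_nonneg (a 0)).trans (ha 0)
    simpa using h00
  refine hasDerivAt_tsum_of_isPreconnected
    (u := fun n : ℕ => (K/r) * (((n:ℝ))+1) * (Real.exp 1 * r)^n)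
    (g' := fun (n : ℕ) (w : ℝ) => a n * (((n:ℝ)) * w^(n-1))) (y₀ := 0)
    (summable_geo_aux (by positivity) hq (K/r)) isOpen_Ioo (convex_Ioo _ _).isPreconnected
    (fun n w _ => by simpa using (hasDerivAt_pow n w).const_mul (a n)) ?_
    ⟨by linarith, hr0⟩ ?_ hz
  · intro n w hw
    have hwr : |w| ≤ r := by
      rw [abs_le]
      exact ⟨le_of_lt hw.1, le_of_lt hw.2⟩
    rcases Nat.eq_zero_or_pos n with h0 | hpos
    · subst h0
      norm_num
      positivity
    · rw [Real.norm_eq_abs, abs_mul, abs_mul, abs_pow, Nat.abs_cast]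
      have h2 : |w|^(n-1) ≤ r^(n-1) := pow_le_pow_left₀ (abs_nonneg w) hwr (n-1)
      have h3 : r^(n-1) = r^n / r := by
        rw [eq_div_iff (ne_of_gt hr0), ← pow_succ]
        congr 1
        omega
      have t1 : (n:ℝ) * |w|^(n-1) ≤ (n:ℝ) * (r^n/r) := by
        rw [← h3]
        exact mul_le_mul_of_nonneg_left h2 (Nat.cast_nonneg n)
      have t2 : |a n| * ((n:ℝ) * |w|^(n-1)) ≤ (K * Real.exp 1 ^ n) * ((n:ℝ) * (r^n/r)) :=
        mul_le_mul (ha n) t1 (by positivity) (mul_nonneg hK (by positivity))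
      have t3 : (K * Real.exp 1 ^ n) * ((n:ℝ) * (r^n/r)) = (K/r) * (n:ℝ) * (Real.exp 1 * r)^n := by
        rw [mul_pow]; field_simp
      have t4 : (K/r) * (n:ℝ) * (Real.exp 1 * r)^n ≤ (K/r) * (((n:ℝ))+1) * (Real.exp 1 * r)^n := by
        have hq0 : (0:ℝ) ≤ (Real.exp 1 * r)^n := pow_nonneg (by positivity) n
        nlinarith [mul_nonneg (div_nonneg hK (le_of_lt hr0)) hq0]
      linarith [t2, t3.le, t3.ge, t4]
  · apply summable_of_ne_finset_zero (s := {0})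
    intro n hn
    have : n ≠ 0 := by simpa using hn
    simp [zero_pow this]

lemma summable_abs_of_coef {f : ℕ → ℝ} {C q : ℝ} (h0 : 0 ≤ q) (h1 : q < 1)
    (hb : ∀ n, |f n| ≤ C * (((n:ℝ))+1) * q^n) : Summable (fun n => |f n|) :=
  Summable.of_nonneg_of_le (fun n => abs_nonneg _) hb (summable_geo_aux h0 h1 C)

lemma summable_series_abs {a : ℕ → ℝ} {K r z : ℝ} (hr0 : 0 < r)
    (hq : Real.exp 1 * r < 1) (ha : ∀ n, |a n| ≤ K * Real.exp 1 ^ n) (hz : |z| ≤ r) :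
    Summable (fun n => ‖a n * z^n‖) := by
  simp only [Real.norm_eq_abs]
  apply summable_abs_of_coef (C := K) (q := Real.exp 1 * r) (by positivity) hq
  intro n
  have hK : 0 ≤ K := by
    have h00 := (abs_nonneg (a 0)).trans (ha 0)
    simpa using h00
  rw [abs_mul, abs_pow]
  have s1 : |a n| * |z|^n ≤ (K * Real.exp 1 ^ n) * |z|^n :=
    mul_le_mul_of_nonneg_right (ha n) (by positivity)
  have s2 : (K * Real.exp 1 ^ n) * |z|^n ≤ (K * Real.exp 1 ^ n) * r^n :=
    mul_le_mul_of_nonneg_left (pow_le_pow_left₀ (abs_nonneg z) hz n)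
      (mul_nonneg hK (by positivity))
  have s3 : (K * Real.exp 1 ^ n) * r^n = K * (Real.exp 1 * r)^n := by rw [mul_pow]; ring
  have s4 : K * (Real.exp 1 * r)^n ≤ K * (((n:ℝ))+1) * (Real.exp 1 * r)^n := by
    have hq0 : (0:ℝ) ≤ (Real.exp 1 * r)^n := pow_nonneg (by positivity) n
    nlinarith [mul_nonneg (mul_nonneg hK hq0) (Nat.cast_nonneg (α := ℝ) n)]
  linarith [s1, s2, s3.le, s3.ge, s4]

lemma pick_r {z : ℝ} (hz : |z| < (Real.exp 1)⁻¹) :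
    ∃ r, 0 < r ∧ |z| ≤ r ∧ Real.exp 1 * r < 1 ∧ z ∈ Set.Ioo (-r) r := by
  refine ⟨(|z| + (Real.exp 1)⁻¹)/2, ?_, ?_, ?_, ?_⟩
  · have : (0:ℝ) < (Real.exp 1)⁻¹ := by positivity
    have := abs_nonneg z
    linarith
  · linarith
  · have he : (0:ℝ) < Real.exp 1 := Real.exp_pos 1
    have h1 : Real.exp 1 * |z| < Real.exp 1 * (Real.exp 1)⁻¹ :=
      mul_lt_mul_of_pos_left hz he
    have h2 : Real.exp 1 * (Real.exp 1)⁻¹ = 1 := mul_inv_cancel₀ (ne_of_gt he)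
    have h3 : Real.exp 1 * ((|z| + (Real.exp 1)⁻¹)/2)
        = (Real.exp 1 * |z| + Real.exp 1 * (Real.exp 1)⁻¹)/2 := by ring
    rw [h3, h2]
    linarith
  · constructor
    · have := neg_abs_le z
      have : (0:ℝ) < (Real.exp 1)⁻¹ := by positivity
      have h4 := neg_abs_le z
      nlinarith [abs_nonneg z]
    · have h5 := le_abs_self z
      have : (0:ℝ) < (Real.exp 1)⁻¹ := by positivity
      nlinarith

lemma fact_succ_cast (n : ℕ) : (((n+1).factorial : ℕ):ℝ) = ((n:ℝ)+1) * (n.factorial : ℝ) := by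
  rw [Nat.factorial_succ]; push_cast; ring

lemma treeFn_hasDeriv {z : ℝ} (hz : |z| < (Real.exp 1)⁻¹) : HasDerivAt treeFn (Td z) z := by
  obtain ⟨r, hr0, hzr, hq, hIoo⟩ := pick_r hz
  have h := hasDerivAt_series (K := 1) hr0 hq tcoef_abs hIoo
  have heq : (∑' n : ℕ, tcoef n * (((n:ℝ)) * z^(n-1))) = Td z := by
    rw [Summable.tsum_eq_zero_add (summable_deriv_series (K := 1) hr0 hq tcoef_abs hzr)]
    have h0 : tcoef 0 * (((0:ℕ):ℝ) * z^(0-1)) = 0 := by simp [tcoef]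
    rw [h0, zero_add, Td]
    apply tsum_congr
    intro n
    have hne : (n+1) ≠ 0 := by omega
    have hc : tcoef (n+1) = ((n:ℝ)+1)^n / ((n+1).factorial : ℝ) := by
      have e1 : (n+1) - 1 = n := by omega
      rw [tcoef, if_neg hne, e1]
      push_cast
      ring
    rw [hc, fact_succ_cast]
    have he : (n+1) - 1 = n := by omega
    rw [he]
    have hfne : ((n.factorial : ℕ):ℝ) ≠ 0 := by positivity
    have hn1 : ((n:ℝ)+1) ≠ 0 := by positivity
    push_cast
    field_simp
  rw [← heq]
  exact h

lemma Ef_hasDeriv {z : ℝ} (hz : |z| < (Real.exp 1)⁻¹) : HasDerivAt Ef (Ed z) z := by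
  obtain ⟨r, hr0, hzr, hq, hIoo⟩ := pick_r hz
  have h := hasDerivAt_series (K := Real.exp 1) hr0 hq Efcoef_abs hIoo
  have heq : (∑' n : ℕ, (((n:ℝ)+1)^n / (n+1).factorial) * (((n:ℝ)) * z^(n-1))) = Ed z := by
    rw [Summable.tsum_eq_zero_add (summable_deriv_series (K := Real.exp 1) hr0 hq Efcoef_abs hzr)]
    have h0 : (((0:ℕ):ℝ)+1)^0 / (0+1).factorial * (((0:ℕ):ℝ) * z^(0-1)) = 0 := by norm_num
    rw [h0, zero_add, Ed]
    apply tsum_congr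
    intro n
    have he : (n+1) - 1 = n := by omega
    rw [he]
    have h1 : (((n+1:ℕ):ℝ)+1) = (n:ℝ)+2 := by push_cast; ring
    have h2 : (((n+1+1).factorial : ℕ):ℝ) = ((n:ℝ)+2) * (((n:ℝ)+1) * (n.factorial : ℝ)) := by
      rw [fact_succ_cast, fact_succ_cast]
      push_cast; ring
    rw [h1, h2]
    have h3 : ((n:ℝ)+2)^(n+1) = ((n:ℝ)+2)^n * ((n:ℝ)+2) := by rw [pow_succ]
    rw [h3]
    have hfne : ((n.factorial : ℕ):ℝ) ≠ 0 := by positivity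
    have hn1 : ((n:ℝ)+1) ≠ 0 := by positivity
    have hn2 : ((n:ℝ)+2) ≠ 0 := by positivity
    push_cast
    field_simp
  rw [← heq]
  exact h

lemma Ef_zero : Ef 0 = 1 := by
  rw [Ef]
  rw [tsum_eq_single 0 (fun n hn => by simp [zero_pow hn])]
  norm_num

lemma treeFn_zero : treeFn 0 = 0 := by
  rw [treeFn_eq]
  have : ∀ n : ℕ, tcoef n * (0:ℝ)^n = 0 := by
    intro n
    rcases Nat.eq_zero_or_pos n with h0 | hpos
    · subst h0; simp [tcoef]
    · simp [zero_pow (by omega : n ≠ 0)]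
  rw [tsum_congr this]
  exact tsum_zero

lemma treeFn_eq_mul {z : ℝ} (hz : |z| < (Real.exp 1)⁻¹) : treeFn z = z * Ef z := by
  obtain ⟨r, hr0, hzr, hq, hIoo⟩ := pick_r hz
  rw [treeFn_eq, Summable.tsum_eq_zero_add (summable_series (K := 1) hr0 hq tcoef_abs hzr)]
  have h0 : tcoef 0 * z^0 = 0 := by simp [tcoef]
  rw [h0, zero_add]
  have hcong : ∀ n : ℕ, tcoef (n+1) * z^(n+1) = z * ((((n:ℝ)+1)^n / (n+1).factorial) * z^n) := by
    intro n
    have hne : (n+1) ≠ 0 := by omega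
    have hc : tcoef (n+1) = ((n:ℝ)+1)^n / ((n+1).factorial : ℝ) := by
      have e1 : (n+1) - 1 = n := by omega
      rw [tcoef, if_neg hne, e1]
      push_cast
      ring
    rw [hc, pow_succ]
    ring
  rw [tsum_congr hcong, tsum_mul_left, Ef]

lemma pow_pred_mul (m : ℕ) : ((m:ℝ)+1)^m = ((m:ℝ)+1)^(m-1) * ((m:ℝ)+1) := by
  rcases m with _ | j
  · norm_num
  · rw [Nat.add_sub_cancel, pow_succ]

lemma cauchy {z : ℝ} (hz : |z| < (Real.exp 1)⁻¹) : Ed z = Td z * Ef z := by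
  obtain ⟨r, hr0, hzr, hq, hIoo⟩ := pick_r hz
  have hf : Summable (fun n : ℕ => ‖(((n:ℝ)+1)^n / n.factorial) * z^n‖) :=
    summable_series_abs (K := Real.exp 1) hr0 hq Tdcoef_abs hzr
  have hg : Summable (fun n : ℕ => ‖(((n:ℝ)+1)^n / (n+1).factorial) * z^n‖) :=
    summable_series_abs (K := Real.exp 1) hr0 hq Efcoef_abs hzr
  rw [Td, Ef, tsum_mul_tsum_eq_tsum_sum_range_of_summable_norm hf hg, Ed]
  apply tsum_congr
  intro n
  have inner : ∀ k ∈ range (n+1),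
      ((((k:ℝ))+1)^k / k.factorial) * z^k * (((((n-k:ℕ)):ℝ)+1)^(n-k) / ((n-k)+1).factorial * z^(n-k))
      = ((n.choose k : ℝ) * ((k:ℝ)+1)^k * (((n-k:ℕ):ℝ)+1)^(n-k-1)) * (z^n / n.factorial) := by
    intro k hk
    have hkn : k ≤ n := by have := Finset.mem_range.mp hk; omega
    set m := n - k with hm
    have hkm : k + m = n := by omega
    have hz1 : z^k * z^m = z^n := by rw [← pow_add, hkm]
    have hcc : (n.choose k : ℝ) = (n.factorial : ℝ) / (k.factorial * m.factorial) :=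
      Nat.cast_choose ℝ hkn
    have hp := pow_pred_mul m
    have hfs := fact_succ_cast m
    have h1 : (k.factorial : ℝ) ≠ 0 := by positivity
    have h2 : (m.factorial : ℝ) ≠ 0 := by positivity
    have h3 : (n.factorial : ℝ) ≠ 0 := by positivity
    have h4 : ((m:ℕ):ℝ)+1 ≠ 0 := by positivity
    rw [hcc, hfs, hp, ← hz1]
    field_simp
  rw [Finset.sum_congr rfl inner, ← Finset.sum_mul, abelSum]
  field_simp

lemma r_lt_inv {r : ℝ} (hr0 : 0 < r) (hq : Real.exp 1 * r < 1) : r < (Real.exp 1)⁻¹ := by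
  have he : (0:ℝ) < Real.exp 1 := Real.exp_pos 1
  have h2 : Real.exp 1 * r < Real.exp 1 * (Real.exp 1)⁻¹ := by
    rw [mul_inv_cancel₀ (ne_of_gt he)]
    exact hq
  exact lt_of_mul_lt_mul_left h2 he.le

lemma Ef_eq_exp {z : ℝ} (hz : |z| < (Real.exp 1)⁻¹) : Ef z = Real.exp (treeFn z) := by
  obtain ⟨r, hr0, hzr, hq, hIoo⟩ := pick_r hz
  have hrinv : r < (Real.exp 1)⁻¹ := r_lt_inv hr0 hq
  have hmem : ∀ w ∈ Set.Ioo (-r) r, |w| < (Real.exp 1)⁻¹ := by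
    intro w hw
    rw [abs_lt]
    exact ⟨by linarith [hw.1], by linarith [hw.2]⟩
  have hF : ∀ w ∈ Set.Ioo (-r) r,
      HasDerivAt (fun w => Ef w * Real.exp (-treeFn w)) 0 w := by
    intro w hw
    have hw' := hmem w hw
    have h1 := treeFn_hasDeriv hw'
    have h2 := Ef_hasDeriv hw'
    have h3 : HasDerivAt (fun w => Real.exp (-treeFn w))
        (Real.exp (-treeFn w) * (-Td w)) w := (h1.neg).exp
    have h4 := h2.mul h3
    rw [cauchy hw'] at h4
    have h5 : Td w * Ef w * Real.exp (-treeFn w)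
        + Ef w * (Real.exp (-treeFn w) * (-Td w)) = 0 := by ring
    rw [h5] at h4
    exact h4
  have hdiff : DifferentiableOn ℝ (fun w => Ef w * Real.exp (-treeFn w)) (Set.Ioo (-r) r) :=
    fun w hw => ((hF w hw).differentiableAt).differentiableWithinAt
  have hzero : ∀ x ∈ Set.Ioo (-r) r,
      fderivWithin ℝ (fun w => Ef w * Real.exp (-treeFn w)) (Set.Ioo (-r) r) x = 0 := by
    intro x hx
    rw [fderivWithin_of_isOpen isOpen_Ioo hx]
    have := (hF x hx).hasFDerivAt.fderiv
    rw [this]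
    ext v
    simp
  have h0mem : (0:ℝ) ∈ Set.Ioo (-r) r := ⟨by linarith, hr0⟩
  have hconst := (convex_Ioo (-r) r).is_const_of_fderivWithin_eq_zero
    hdiff hzero hIoo h0mem
  rw [treeFn_zero, Ef_zero] at hconst
  norm_num at hconst
  have hexp_ne : Real.exp (treeFn z) ≠ 0 := Real.exp_ne_zero _
  have hne : Real.exp (-treeFn z) ≠ 0 := Real.exp_ne_zero _
  rw [Real.exp_neg] at hconst hne
  field_simp at hconst
  exact hconst

lemma funEq {z : ℝ} (hz : |z| < (Real.exp 1)⁻¹) :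
    treeFn z = z * Real.exp (treeFn z) := by
  conv_lhs => rw [treeFn_eq_mul hz]
  rw [Ef_eq_exp hz]

lemma treeFn_nonneg {z : ℝ} (hz : 0 ≤ z) : 0 ≤ treeFn z := by
  rw [treeFn_eq]
  apply tsum_nonneg
  intro n
  apply mul_nonneg
  · rw [tcoef]
    split
    · exact le_refl 0
    · positivity
  · exact pow_nonneg hz n

lemma treeFn_contOn {b : ℝ} (hb : 0 ≤ b) (hb' : b < (Real.exp 1)⁻¹) :
    ContinuousOn treeFn (Set.Icc 0 b) := by
  intro w hw
  have hw' : |w| < (Real.exp 1)⁻¹ := by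
    rw [abs_lt]
    have h1 := hw.1
    have h2 := hw.2
    have : (0:ℝ) < (Real.exp 1)⁻¹ := by positivity
    constructor <;> linarith
  exact (treeFn_hasDeriv hw').continuousAt.continuousWithinAt

lemma treeFn_lt_one {z : ℝ} (hz0 : 0 ≤ z) (hz : z < (Real.exp 1)⁻¹) : treeFn z < 1 := by
  by_contra h
  push_neg at h
  have hIcc : (1:ℝ) ∈ Set.Icc (treeFn 0) (treeFn z) := by
    rw [treeFn_zero]
    exact ⟨by norm_num, h⟩
  have hIVT := intermediate_value_Icc hz0 (treeFn_contOn hz0 hz)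
  obtain ⟨c, hc, hfc⟩ := hIVT hIcc
  have hc_abs : |c| < (Real.exp 1)⁻¹ := by
    rw [abs_lt]
    have : (0:ℝ) < (Real.exp 1)⁻¹ := by positivity
    exact ⟨by linarith [hc.1], by linarith [hc.2, hz]⟩
  have := funEq hc_abs
  rw [hfc] at this
  -- 1 = c * exp 1
  have hc_eq : c = (Real.exp 1)⁻¹ := by
    field_simp at this ⊢
    linarith [this]
  have := hc.2
  rw [hc_eq] at this
  linarith [hz]

lemma half_exp_lt_two : Real.exp (1/2) < 2 := by
  have hsq : Real.exp (1/2) * Real.exp (1/2) = Real.exp 1 := by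
    rw [← Real.exp_add]; norm_num
  nlinarith [Real.exp_pos (1/2), Real.exp_one_lt_d9]

lemma treeFn_ge_half {z : ℝ} (hz0 : (1/2) * Real.exp (-(1/2)) < z)
    (hz : z < (Real.exp 1)⁻¹) : 1/2 ≤ treeFn z := by
  have ha0 : (0:ℝ) < (1/2) * Real.exp (-(1/2)) := by positivity
  have hz_abs : |z| < (Real.exp 1)⁻¹ := by
    rw [abs_lt]
    have : (0:ℝ) < (Real.exp 1)⁻¹ := by positivity
    exact ⟨by linarith, hz⟩
  by_contra h
  push_neg at h
  set T := treeFn z with hT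
  have hT0 : 0 ≤ T := treeFn_nonneg (by linarith)
  have hfe := funEq hz_abs
  -- z = T * exp (-T)
  have hzT : z = T * Real.exp (-T) := by
    have hepos := Real.exp_pos T
    rw [Real.exp_neg]
    field_simp
    linarith [hfe]
  -- key : T * exp(1/2) ≤ (1/2) * exp T
  have h1 := Real.add_one_le_exp (T - 1/2)
  have h2 : Real.exp (T - 1/2) * Real.exp (1/2) = Real.exp T := by
    rw [← Real.exp_add]; ring_nf
  have key : T * Real.exp (1/2) ≤ (1/2) * Real.exp T := by
    nlinarith [mul_le_mul_of_nonneg_right h1 (Real.exp_pos (1/2)).le,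
      mul_nonneg (by linarith : (0:ℝ) ≤ 1/4 - T/2) (Real.exp_pos (1/2)).le]
  -- then z ≤ (1/2) exp(-1/2), contradiction
  have hzle : z ≤ (1/2) * Real.exp (-(1/2)) := by
    have hET := Real.exp_pos T
    have hE2 := Real.exp_pos (1/2)
    have e1 : z * (Real.exp T * Real.exp (1/2)) = T * Real.exp (1/2) := by
      rw [hzT]
      have : Real.exp (-T) * Real.exp T = 1 := by
        rw [← Real.exp_add]; norm_num
      nlinarith [this]
    have e2 : z * (Real.exp T * Real.exp (1/2)) ≤ (1/2) * Real.exp T := by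
      rw [e1]; exact key
    have e3 : z * Real.exp (1/2) ≤ 1/2 :=
      le_of_mul_le_mul_right (by nlinarith [e2] :
        (z * Real.exp (1/2)) * Real.exp T ≤ (1/2) * Real.exp T) hET
    have e4 : Real.exp (-(1/2)) * Real.exp (1/2) = 1 := by
      rw [← Real.exp_add]; norm_num
    nlinarith [e3, hE2, e4]
  linarith

lemma h_bounds {u : ℝ} (hu0 : 0 ≤ u) (hu : u ≤ 1/2) :
    u^2/2 + u^3/3 ≤ 1 - (1-u)*Real.exp u ∧
    1 - (1-u)*Real.exp u ≤ u^2/2 + u^3/3 + u^4/4 := by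
  have habs : |u| ≤ 1 := by rw [abs_of_nonneg hu0]; linarith
  have hb := Real.exp_bound habs (by norm_num : 0 < 4)
  have hsum : ∑ m ∈ range 4, u ^ m / (m.factorial : ℝ) = 1 + u + u^2/2 + u^3/6 := by
    simp [Finset.sum_range_succ, Nat.factorial]
    try ring
  rw [hsum] at hb
  have hcoef : |u|^4 * ((4:ℕ).succ / ((4:ℕ).factorial * (4:ℕ)): ℝ) = u^4 * (5/96) := by
    rw [abs_of_nonneg hu0]
    norm_num [Nat.factorial]
  rw [hcoef] at hb
  have hb' := abs_le.mp hb
  have h1u : 0 ≤ 1 - u := by linarith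
  have hu4 : 0 ≤ u^4 := by positivity
  constructor
  · nlinarith [hb'.1, hb'.2]
  · nlinarith [hb'.1, hb'.2]

lemma sqrt2_lt : Real.sqrt 2 < 3/2 := by
  have h : (0:ℝ) ≤ 2 := by norm_num
  nlinarith [Real.sq_sqrt h, Real.sqrt_nonneg 2]

set_option maxHeartbeats 1000000 in
lemma est {u s : ℝ} (hu0 : 0 < u) (hu : u ≤ 1/2) (hs0 : 0 ≤ s)
    (hs : s^2 = 1 - (1-u)*Real.exp u) :
    |(1 - u) - (1 - Real.sqrt 2 * s + (2/3)*s^2)| ≤ 16 * s^3 := by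
  obtain ⟨hlo, hhi⟩ := h_bounds hu0.le hu
  have hs2lo : u^2/2 + u^3/3 ≤ s^2 := by rw [hs]; exact hlo
  have hs2hi : s^2 ≤ u^2/2 + u^3/3 + u^4/4 := by rw [hs]; exact hhi
  set L : ℝ := u + u^2/3 - u^3 with hL
  set U : ℝ := u + u^2/3 + u^3 with hU
  clear_value L U
  have husq : u^2 ≤ 1/4 := by nlinarith
  have h6 : u^6 ≤ u^4/4 := by nlinarith [pow_nonneg hu0.le 4]
  have h5 : (0:ℝ) ≤ u^5 := by positivity
  have h4 : (0:ℝ) ≤ u^4 := by positivity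
  have h3 : u^3 ≤ u/4 := by nlinarith [mul_le_mul_of_nonneg_left husq hu0.le]
  have hL0 : 0 ≤ L := by rw [hL]; nlinarith
  have hLsq : L^2 ≤ 2*s^2 := by rw [hL]; nlinarith [hs2lo, h6, h5, h4]
  have hUsq : 2*s^2 ≤ U^2 := by rw [hU]; nlinarith [hs2hi, h6, h5, h4]
  have hU0 : 0 ≤ U := by rw [hU]; positivity
  -- L ≤ √2 s ≤ U
  have hsqrt2s : Real.sqrt 2 * s = Real.sqrt (2*s^2) := by
    rw [Real.sqrt_mul (by norm_num : (0:ℝ) ≤ 2), Real.sqrt_sq hs0]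
  have hlow : L ≤ Real.sqrt 2 * s := by
    rw [hsqrt2s]
    calc L = Real.sqrt (L^2) := (Real.sqrt_sq hL0).symm
      _ ≤ Real.sqrt (2*s^2) := Real.sqrt_le_sqrt hLsq
  have hhigh : Real.sqrt 2 * s ≤ U := by
    rw [hsqrt2s]
    calc Real.sqrt (2*s^2) ≤ Real.sqrt (U^2) := Real.sqrt_le_sqrt hUsq
      _ = U := Real.sqrt_sq hU0
  -- u ≤ 2 s
  have hu2s : u ≤ 2*s := by
    have h34 : (3/4)*u ≤ L := by rw [hL]; nlinarith [h3]
    have hs32 : Real.sqrt 2 * s ≤ (3/2)*s := by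
      apply mul_le_mul_of_nonneg_right sqrt2_lt.le hs0
    linarith [h34, hlow, hs32]
  have hu3 : u^3 ≤ 8*s^3 := by
    have h1 : u^3 ≤ (2*s)^3 := by
      apply pow_le_pow_left₀ hu0.le hu2s
    have h2 : (2*s)^3 = 8*s^3 := by ring
    linarith [h1, h2]
  have hu4 : u^4 ≤ u^3/2 := by nlinarith
  -- assemble
  have hA : |Real.sqrt 2 * s - (u + u^2/3)| ≤ u^3 := by
    rw [abs_le]
    constructor
    · rw [hU] at hhigh; linarith
    · rw [hL] at hlow; linarith
  have hB1 : 0 ≤ (2/3)*s^2 - (u^2/3 + (2/9)*u^3) := by nlinarith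
  have hB2 : (2/3)*s^2 - (u^2/3 + (2/9)*u^3) ≤ u^4/6 := by nlinarith
  have habsA := abs_le.mp hA
  rw [abs_le]
  constructor
  · linarith [habsA.1, habsA.2, hB1, hB2, hu3, hu4, pow_nonneg hs0 3]
  · linarith [habsA.1, habsA.2, hB1, hB2, hu3, hu4, pow_nonneg hs0 3]

lemma a0_lt_inv : (1/2) * Real.exp (-(1/2)) < (Real.exp 1)⁻¹ := by
  have hE : (0:ℝ) < Real.exp 1 := Real.exp_pos 1
  rw [inv_eq_one_div, lt_div_iff₀ hE]
  have h1 : (1/2) * Real.exp (-(1/2)) * Real.exp 1 = (1/2) * Real.exp (1/2) := by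
    rw [mul_assoc, ← Real.exp_add]
    norm_num
  rw [h1]
  linarith [half_exp_lt_two]

/-- Puiseux expansion of `T` at `z = 1/e`:
`T(z) = 1 − √2·√(1−ez) + (2/3)(1−ez) + O((1−ez)^{3/2})` as `z → 1/e` from the left. -/
theorem treeFn_puiseux :
    (fun z : ℝ =>
        treeFn z - (1 - Real.sqrt 2 * Real.sqrt (1 - Real.exp 1 * z)
          + (2 / 3) * (1 - Real.exp 1 * z)))
      =O[nhdsWithin (Real.exp 1)⁻¹ (Set.Iio (Real.exp 1)⁻¹)]
      fun z : ℝ => (1 - Real.exp 1 * z) ^ (3 / 2 : ℝ) := by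
  apply Asymptotics.IsBigO.of_bound 16
  filter_upwards [Ioo_mem_nhdsLT_of_mem
    (show (Real.exp 1)⁻¹ ∈ Set.Ioc ((1/2) * Real.exp (-(1/2))) (Real.exp 1)⁻¹ from
      ⟨a0_lt_inv, le_refl _⟩)] with z hz
  obtain ⟨hz1, hz2⟩ := hz
  have ha0pos : (0:ℝ) < (1/2) * Real.exp (-(1/2)) := by positivity
  have hz0 : 0 < z := lt_trans ha0pos hz1
  have hzabs : |z| < (Real.exp 1)⁻¹ := by
    rw [abs_of_pos hz0]; exact hz2
  have hE : (0:ℝ) < Real.exp 1 := Real.exp_pos 1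
  have hez : Real.exp 1 * z < 1 := by
    have := mul_lt_mul_of_pos_left hz2 hE
    rwa [mul_inv_cancel₀ (ne_of_gt hE)] at this
  have hsnn : 0 ≤ 1 - Real.exp 1 * z := by linarith
  have hs2 : Real.sqrt (1 - Real.exp 1 * z) ^ 2 = 1 - Real.exp 1 * z := Real.sq_sqrt hsnn
  have hT1 : treeFn z < 1 := treeFn_lt_one hz0.le hz2
  have hT12 : 1/2 ≤ treeFn z := treeFn_ge_half hz1 hz2
  have hu0 : 0 < 1 - treeFn z := by linarith
  have huh : 1 - treeFn z ≤ 1/2 := by linarith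
  have hfe := funEq hzabs
  have hzT : z = treeFn z * Real.exp (-treeFn z) := by
    have h1 : Real.exp (treeFn z) * Real.exp (-treeFn z) = 1 := by
      rw [← Real.exp_add]; norm_num
    calc z = z * (Real.exp (treeFn z) * Real.exp (-treeFn z)) := by rw [h1, mul_one]
      _ = (z * Real.exp (treeFn z)) * Real.exp (-treeFn z) := by ring
      _ = treeFn z * Real.exp (-treeFn z) := by rw [← hfe]
  have key : Real.sqrt (1 - Real.exp 1 * z) ^ 2
      = 1 - (1 - (1 - treeFn z)) * Real.exp (1 - treeFn z) := by
    rw [hs2]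
    have h2 : Real.exp (1 - treeFn z) = Real.exp 1 * Real.exp (-treeFn z) := by
      rw [← Real.exp_add]; ring_nf
    have h3 : (1 - (1 - treeFn z)) = treeFn z := by ring
    rw [h2, h3]
    have h4 : treeFn z * (Real.exp 1 * Real.exp (-treeFn z))
        = Real.exp 1 * (treeFn z * Real.exp (-treeFn z)) := by ring
    rw [h4, ← hzT]
  have hest := est hu0 huh (Real.sqrt_nonneg (1 - Real.exp 1 * z)) key
  have h1u : 1 - (1 - treeFn z) = treeFn z := by ring
  rw [h1u] at hest
  -- rewrite goal
  have hrpow : (1 - Real.exp 1 * z) ^ ((3:ℝ)/2) = Real.sqrt (1 - Real.exp 1 * z) ^ 3 := by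
    rw [show (3:ℝ)/2 = (1/(2:ℝ)) * (3:ℕ) by norm_num, Real.rpow_mul hsnn,
      Real.rpow_natCast, ← Real.sqrt_eq_rpow]
  have hnorm1 : ‖(1 - Real.exp 1 * z) ^ ((3:ℝ)/2)‖ = Real.sqrt (1 - Real.exp 1 * z) ^ 3 := by
    rw [Real.norm_eq_abs, abs_of_nonneg (Real.rpow_nonneg hsnn _), hrpow]
  rw [Real.norm_eq_abs, hnorm1]
  have hgoal_eq : treeFn z - (1 - Real.sqrt 2 * Real.sqrt (1 - Real.exp 1 * z)
      + (2/3) * (1 - Real.exp 1 * z))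
      = treeFn z - (1 - Real.sqrt 2 * Real.sqrt (1 - Real.exp 1 * z)
      + (2/3) * Real.sqrt (1 - Real.exp 1 * z)^2) := by
    rw [hs2]
  rw [hgoal_eq]
  exact hest
end
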